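/- arXiv:1307.4992 — 7 statements merged into one kernel-verified Lean document; each statement's English description precedes it below -/
import Mathlib

section
/- Let U be a separable real Banach space, X a separable real Hilbert space with orthonormal basis (e_k)_{k∈ℕ}, and i : X → U a bounded linear operator. Let (ξ_k)_{k∈ℕ} be a sequence of independent standard Gaussian random variables on a probability space (Ω, 𝒜, P). Then for every u* ∈ U* the series Z u* := ∑_{k=1}^∞ ⟨i e_k, u*⟩ ξ_k converges in L²_P(Ω;ℝ) and its characteristic function satisfies E[exp(i·θ·(Z u*))] evaluated at θ = 1 equals exp(−(1/2)‖i* u*‖²_X); that is, E[exp(i (Z u*))] = exp(−(1/2)‖i* u*‖²_X) for all u* ∈ U*. -/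
open MeasureTheory Filter Set
open scoped ENNReal NNReal RealInnerProductSpace

section Aux
open MeasureTheory Filter Set Complex
open scoped ENNReal NNReal Real

lemma gaussPdfSmul' {E : Type*} [NormedAddCommGroup E] [NormedSpace ℝ E] (f : ℝ → E) :
    ∫ x, f x ∂(ProbabilityTheory.gaussianReal 0 1)
      = ∫ x, ProbabilityTheory.gaussianPDFReal 0 1 x • f x := by
  rw [ProbabilityTheory.gaussianReal_of_var_ne_zero _ one_ne_zero]
  have h : ProbabilityTheory.gaussianPDF 0 1 = fun x =>
      ((ProbabilityTheory.gaussianPDFReal 0 1 x).toNNReal : ℝ≥0∞) := rfl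
  rw [h, integral_withDensity_eq_integral_smul
    (ProbabilityTheory.measurable_gaussianPDFReal 0 1).real_toNNReal f]
  refine integral_congr_ae (Eventually.of_forall fun x => ?_)
  simp only [NNReal.smul_def, Real.coe_toNNReal _ (ProbabilityTheory.gaussianPDFReal_nonneg 0 1 x)]

lemma gauss_pdf_eq (x : ℝ) : ProbabilityTheory.gaussianPDFReal 0 1 x
    = (Real.sqrt (2 * Real.pi))⁻¹ * Real.exp (-(1/2) * x ^ 2) := by
  simp only [ProbabilityTheory.gaussianPDFReal, NNReal.coe_one, mul_one, zero_sub, neg_sq,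
    sub_zero]
  ring_nf

lemma gauss_memL2 : MemLp (id : ℝ → ℝ) 2 (ProbabilityTheory.gaussianReal 0 1) := by
  rw [memLp_two_iff_integrable_sq aestronglyMeasurable_id]
  rw [ProbabilityTheory.gaussianReal_of_var_ne_zero _ one_ne_zero]
  have h : ProbabilityTheory.gaussianPDF 0 1 = fun x =>
      ((ProbabilityTheory.gaussianPDFReal 0 1 x).toNNReal : ℝ≥0∞) := rfl
  rw [h, integrable_withDensity_iff_integrable_smul
    (ProbabilityTheory.measurable_gaussianPDFReal 0 1).real_toNNReal]
  have hint : Integrable (fun x : ℝ => x ^ ((2:ℕ):ℝ) * Real.exp (-(1/2) * x^2)) :=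
    integrable_rpow_mul_exp_neg_mul_sq (by norm_num) (by norm_num)
  simp only [Real.rpow_natCast] at hint
  refine ((hint.const_mul ((Real.sqrt (2 * Real.pi))⁻¹)).congr
    (Eventually.of_forall fun x => ?_))
  have hx : ((ProbabilityTheory.gaussianPDFReal 0 1 x).toNNReal : ℝ)
      = ProbabilityTheory.gaussianPDFReal 0 1 x :=
    Real.coe_toNNReal _ (ProbabilityTheory.gaussianPDFReal_nonneg 0 1 x)
  dsimp only
  rw [NNReal.smul_def, hx, gauss_pdf_eq]
  simp only [id, smul_eq_mul]
  ring

lemma gauss_mean : ∫ x, x ∂(ProbabilityTheory.gaussianReal 0 1) = 0 := by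
  rw [gaussPdfSmul' (fun x => x)]
  set F : ℝ → ℝ := fun x => ProbabilityTheory.gaussianPDFReal 0 1 x • x with hF
  have hodd : ∀ x, F (-x) = - F x := by
    intro x
    simp only [hF, smul_eq_mul, gauss_pdf_eq, neg_sq, mul_neg]
  have h := MeasureTheory.integral_neg_eq_self F (volume : Measure ℝ)
  have h2 : ∫ x, F (-x) = - ∫ x, F x := by
    simp_rw [hodd]; exact integral_neg F
  rw [h2] at h
  linarith [h]

lemma gaussCharFun (c : ℝ) :
    ∫ x, Complex.exp (Complex.I * (c * x : ℝ)) ∂(ProbabilityTheory.gaussianReal 0 1)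
      = Complex.exp (-(c^2 : ℂ)/2) := by
  rw [gaussPdfSmul' _]
  have hpdf : ∀ x : ℝ, ProbabilityTheory.gaussianPDFReal 0 1 x
      = (Real.sqrt (2 * Real.pi))⁻¹ * Real.exp (-(1/2) * x ^ 2) := by
    intro x
    simp only [ProbabilityTheory.gaussianPDFReal, NNReal.coe_one, mul_one, zero_sub, neg_sq,
      sub_zero]
    ring_nf
  have key := fourierIntegral_gaussian (b := (1/2 : ℂ)) (by norm_num) (c : ℂ)
  have hsqrt : ((Real.pi : ℂ) / (1/2 : ℂ)) ^ (1/2 : ℂ) = (Real.sqrt (2 * Real.pi) : ℂ) := by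
    have h2 : ((Real.pi : ℂ) / (1/2)) = ((2 * Real.pi : ℝ) : ℂ) := by push_cast; ring
    rw [h2, show (1/2 : ℂ) = ((1/2 : ℝ) : ℂ) by norm_num,
      ← Complex.ofReal_cpow (by positivity), Real.sqrt_eq_rpow]
  have h1 : ∫ x : ℝ, Complex.exp (Complex.I * (c * x : ℝ)) * Complex.exp (-(1/2 : ℂ) * x ^ 2)
      = (Real.sqrt (2 * Real.pi) : ℂ) * Complex.exp (-(c^2 : ℂ)/2) := by
    calc ∫ x : ℝ, Complex.exp (Complex.I * (c * x : ℝ)) * Complex.exp (-(1/2 : ℂ) * x ^ 2)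
        = ∫ x : ℝ, Complex.exp (Complex.I * (c:ℂ) * (x:ℂ)) * Complex.exp (-(1/2 : ℂ) * x ^ 2) := by
          refine integral_congr_ae (Eventually.of_forall fun x => ?_); push_cast; ring_nf
      _ = ((Real.pi : ℂ) / (1/2 : ℂ)) ^ (1/2 : ℂ) * Complex.exp (-(c:ℂ)^2 / (4 * (1/2 : ℂ))) := key
      _ = (Real.sqrt (2 * Real.pi) : ℂ) * Complex.exp (-(c^2 : ℂ)/2) := by
          rw [hsqrt]; norm_num
  calc ∫ x, ProbabilityTheory.gaussianPDFReal 0 1 x • Complex.exp (Complex.I * (c * x : ℝ))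
      = ∫ x : ℝ, (Real.sqrt (2 * Real.pi))⁻¹ •
          (Complex.exp (Complex.I * (c * x : ℝ)) * Complex.exp (-(1/2 : ℂ) * x ^ 2)) := by
        refine integral_congr_ae (Eventually.of_forall fun x => ?_)
        dsimp only
        rw [hpdf x, mul_smul]
        congr 1
        rw [Complex.real_smul, mul_comm]
        congr 1
        rw [Complex.ofReal_exp]
        push_cast
        ring_nf
    _ = (Real.sqrt (2 * Real.pi))⁻¹ • ((Real.sqrt (2 * Real.pi) : ℂ) * Complex.exp (-(c^2 : ℂ)/2)) := by
        rw [integral_smul, h1]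
    _ = Complex.exp (-(c^2 : ℂ)/2) := by
        rw [Complex.real_smul, ← mul_assoc, ← Complex.ofReal_mul,
          inv_mul_cancel₀ (by positivity : √(2 * Real.pi) ≠ 0), Complex.ofReal_one, one_mul]

lemma indep_cexp {Ω : Type*} [MeasurableSpace Ω] {P : Measure Ω} [IsProbabilityMeasure P]
    {A B : Ω → ℝ} (hA : Measurable A) (hB : Measurable B)
    (h : ProbabilityTheory.IndepFun A B P) :
    ∫ ω, Complex.exp (Complex.I * ((A ω + B ω : ℝ) : ℂ)) ∂P
      = (∫ ω, Complex.exp (Complex.I * ((A ω : ℝ) : ℂ)) ∂P)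
        * ∫ ω, Complex.exp (Complex.I * ((B ω : ℝ) : ℂ)) ∂P := by
  have hmap := (ProbabilityTheory.indepFun_iff_map_prod_eq_prod_map_map
    hA.aemeasurable hB.aemeasurable).mp h
  have hcont : Continuous fun z : ℝ × ℝ =>
      Complex.exp (Complex.I * (z.1 : ℂ)) * Complex.exp (Complex.I * (z.2 : ℂ)) := by
    fun_prop
  have hcont1 : Continuous fun x : ℝ => Complex.exp (Complex.I * (x : ℂ)) := by fun_prop
  calc ∫ ω, Complex.exp (Complex.I * ((A ω + B ω : ℝ) : ℂ)) ∂P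
      = ∫ ω, Complex.exp (Complex.I * ((A ω : ℝ):ℂ)) * Complex.exp (Complex.I * ((B ω : ℝ):ℂ)) ∂P := by
        refine integral_congr_ae (Eventually.of_forall fun ω => ?_)
        dsimp only
        rw [← Complex.exp_add]
        congr 1
        push_cast
        ring
    _ = ∫ z : ℝ × ℝ, Complex.exp (Complex.I * (z.1 : ℂ)) * Complex.exp (Complex.I * (z.2 : ℂ))
          ∂(P.map fun ω => (A ω, B ω)) :=
        (integral_map (hA.prodMk hB).aemeasurable hcont.aestronglyMeasurable).symm
    _ = ∫ z : ℝ × ℝ, Complex.exp (Complex.I * (z.1 : ℂ)) * Complex.exp (Complex.I * (z.2 : ℂ))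
          ∂((P.map A).prod (P.map B)) := by rw [hmap]
    _ = (∫ x, Complex.exp (Complex.I * (x : ℂ)) ∂(P.map A))
          * ∫ y, Complex.exp (Complex.I * (y : ℂ)) ∂(P.map B) :=
        integral_prod_mul (fun x : ℝ => Complex.exp (Complex.I * (x : ℂ)))
          (fun y : ℝ => Complex.exp (Complex.I * (y : ℂ)))
    _ = _ := by
        rw [integral_map hA.aemeasurable hcont1.aestronglyMeasurable,
          integral_map hB.aemeasurable hcont1.aestronglyMeasurable]

end Aux

/-- The adjoint `i* : U* → X` of a bounded linear operator `i : X → U` from a Hilbert space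
into a Banach space, via the Riesz representation. -/
noncomputable def iStar {X U : Type*} [NormedAddCommGroup X] [InnerProductSpace ℝ X]
    [CompleteSpace X] [NormedAddCommGroup U] [NormedSpace ℝ U]
    (i : X →L[ℝ] U) (u : U →L[ℝ] ℝ) : X :=
  (InnerProductSpace.toDual ℝ X).symm (u.comp i)

/-- For a sequence of independent standard Gaussians, the series
`Z u* = ∑ ⟨i e_k, u*⟩ ξ_k` converges in `L²` and has characteristic function
`E[exp(i Z u*)] = exp(-½ ‖i* u*‖²)`. -/
theorem statement4
    (U : Type*) [NormedAddCommGroup U] [NormedSpace ℝ U]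
    [TopologicalSpace.SeparableSpace U] [CompleteSpace U]
    (X : Type*) [NormedAddCommGroup X] [InnerProductSpace ℝ X]
    [TopologicalSpace.SeparableSpace X] [CompleteSpace X]
    (e : HilbertBasis ℕ ℝ X) (i : X →L[ℝ] U)
    (Ω : Type*) [MeasurableSpace Ω] (P : Measure Ω) [IsProbabilityMeasure P]
    (ξ : ℕ → Ω → ℝ) (hmeas : ∀ k, Measurable (ξ k))
    (hindep : ProbabilityTheory.iIndepFun ξ P)
    (hgauss : ∀ k, Measure.map (ξ k) P = ProbabilityTheory.gaussianReal 0 1) :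
    ∀ u : U →L[ℝ] ℝ, ∃ g : Ω → ℝ,
      MemLp g 2 P ∧
      Tendsto (fun N => eLpNorm
          (fun ω => g ω - ∑ k ∈ Finset.range N, u (i (e k)) * ξ k ω) 2 P)
        atTop (nhds 0) ∧
      ∫ ω, Complex.exp (Complex.I * (g ω : ℂ)) ∂P
        = Complex.exp (-(1 / 2) * ((‖iStar i u‖ ^ 2 : ℝ) : ℂ)) := by
  intro u
  set v : X := iStar i u with hv
  set c : ℕ → ℝ := fun k => u (i (e k)) with hcdef
  -- c k is the coefficient of v in the basis
  have hcv : ∀ k, c k = ⟪v, e k⟫ := fun k =>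
    (InnerProductSpace.toDual_symm_apply (y := u.comp i) (x := e k)).symm
  -- sum of squares
  have hsum : HasSum (fun k => c k ^ 2) (‖v‖ ^ 2) := by
    have h := e.hasSum_inner_mul_inner v v
    rw [real_inner_self_eq_norm_sq] at h
    have heq : (fun k => c k ^ 2) = fun k => ⟪v, e k⟫ * ⟪e k, v⟫ := by
      funext k; rw [hcv k, sq, real_inner_comm (e k) v]
    rw [heq]; exact h
  -- each ξ k is in L²
  have hL2 : ∀ k, MemLp (ξ k) 2 P := by
    intro k
    have h : MemLp (id : ℝ → ℝ) 2 (Measure.map (ξ k) P) := by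
      rw [hgauss k]; exact gauss_memL2
    exact (memLp_map_measure_iff aestronglyMeasurable_id (hmeas k).aemeasurable).mp h
  -- mean zero
  have hmean : ∀ k, ∫ ω, ξ k ω ∂P = 0 := by
    intro k
    have h : ∫ x, x ∂(Measure.map (ξ k) P) = ∫ ω, ξ k ω ∂P :=
      integral_map (hmeas k).aemeasurable aestronglyMeasurable_id
    rw [← h, hgauss k, gauss_mean]
  -- second moments
  set C : ℝ := ∫ x, x ^ 2 ∂(ProbabilityTheory.gaussianReal 0 1) with hCdef
  have hC0 : 0 ≤ C := integral_nonneg fun x => sq_nonneg x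
  have hinner : ∀ j k, ∫ ω, ξ j ω * ξ k ω ∂P = if j = k then C else 0 := by
    intro j k
    by_cases hjk : j = k
    · subst hjk
      simp only [if_pos rfl]
      have h : ∫ x, x ^ 2 ∂(Measure.map (ξ j) P) = ∫ ω, (ξ j ω) ^ 2 ∂P :=
        integral_map (hmeas j).aemeasurable
          (continuous_pow 2).aestronglyMeasurable
      rw [hCdef, ← hgauss j, h]
      simp [sq]
    · simp only [if_neg hjk]
      have hind : ProbabilityTheory.IndepFun (ξ j) (ξ k) P := hindep.indepFun hjk
      rw [hind.integral_fun_mul_eq_mul_integral (hmeas j).aestronglyMeasurable (hmeas k).aestronglyMeasurable,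
        hmean j, hmean k, mul_zero]
  -- L² elements
  set ζ : ℕ → Lp ℝ 2 P := fun k => (hL2 k).toLp (ξ k) with hζdef
  have hζinner : ∀ j k, ⟪ζ j, ζ k⟫ = if j = k then C else 0 := by
    intro j k
    rw [← hinner j k, L2.inner_def]
    refine integral_congr_ae ?_
    filter_upwards [(hL2 j).coeFn_toLp, (hL2 k).coeFn_toLp] with ω h1 h2
    rw [hζdef]
    dsimp only
    rw [h1, h2, RCLike.inner_apply, RCLike.conj_to_real, mul_comm]
  -- norm of finite linear combinations
  have hnorm : ∀ s : Finset ℕ, ‖∑ k ∈ s, c k • ζ k‖ ^ 2 = C * ∑ k ∈ s, c k ^ 2 := by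
    intro s
    rw [← real_inner_self_eq_norm_sq]
    have h1 : ⟪∑ j ∈ s, c j • ζ j, ∑ k ∈ s, c k • ζ k⟫
        = ∑ j ∈ s, ∑ k ∈ s, c j * (c k * ⟪ζ k, ζ j⟫) := by
      simp only [sum_inner, inner_sum, real_inner_smul_left, real_inner_smul_right]
    rw [h1]
    have h2 : ∀ j ∈ s, (∑ k ∈ s, c j * (c k * ⟪ζ k, ζ j⟫)) = c j ^ 2 * C := by
      intro j hj
      rw [Finset.sum_eq_single j]
      · rw [hζinner j j, if_pos rfl]; ring
      · intro b _ hbj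
        rw [hζinner b j, if_neg hbj, mul_zero, mul_zero]
      · intro h; exact absurd hj h
    rw [Finset.sum_congr rfl h2, ← Finset.sum_mul]
    ring
  -- summability of the series in L²
  have hSsum : Summable (fun k => c k • ζ k) := by
    rw [summable_iff_vanishing_norm]
    intro ε hε
    obtain ⟨s, hs⟩ := summable_iff_vanishing_norm.mp hsum.summable (ε^2 / (C+1))
      (by positivity)
    refine ⟨s, fun t ht => ?_⟩
    have h1 := hnorm t
    have h2 := hs t ht
    have hT0 : (0:ℝ) ≤ ∑ k ∈ t, c k ^ 2 := Finset.sum_nonneg fun _ _ => sq_nonneg _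
    have h3 : ∑ k ∈ t, c k ^ 2 < ε^2/(C+1) := by
      rwa [Real.norm_eq_abs, abs_of_nonneg hT0] at h2
    have h4 : (∑ k ∈ t, c k ^ 2) * (C+1) < ε^2 := (lt_div_iff₀ (by positivity)).mp h3
    nlinarith [norm_nonneg (∑ k ∈ t, c k • ζ k), sq_nonneg (‖∑ k ∈ t, c k • ζ k‖ - ε),
      sq_nonneg (‖∑ k ∈ t, c k • ζ k‖ + ε)]
  obtain ⟨L, hL⟩ := hSsum
  have hLt : Tendsto (fun N => ∑ k ∈ Finset.range N, c k • ζ k) atTop (nhds L) :=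
    hL.tendsto_sum_nat
  -- identify coercions
  have hScoe : ∀ N, (((∑ k ∈ Finset.range N, c k • ζ k : Lp ℝ 2 P)) : Ω → ℝ)
      =ᵐ[P] fun ω => ∑ k ∈ Finset.range N, c k * ξ k ω := by
    intro N
    induction N with
    | zero => simp only [Finset.range_zero, Finset.sum_empty]; exact Lp.coeFn_zero ℝ 2 P
    | succ N ih =>
      have hadd := Lp.coeFn_add (∑ k ∈ Finset.range N, c k • ζ k) (c N • ζ N)
      have hsmul := Lp.coeFn_smul (c N) (ζ N)
      have htl := (hL2 N).coeFn_toLp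
      rw [Finset.sum_range_succ]
      filter_upwards [hadd, hsmul, htl, ih] with ω h1 h2 h3 h4
      rw [Finset.sum_range_succ, h1, Pi.add_apply, h4, h2, Pi.smul_apply, smul_eq_mul]
      congr 1
      rw [hζdef]
      dsimp only
      rw [h3]
  have hdiff : ∀ N, eLpNorm
      (fun ω => L ω - ∑ k ∈ Finset.range N, c k * ξ k ω) 2 P
      = (‖L - ∑ k ∈ Finset.range N, c k • ζ k‖₊ : ℝ≥0∞) := by
    intro N
    rw [← enorm_eq_nnnorm, Lp.enorm_def]
    apply eLpNorm_congr_ae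
    filter_upwards [hScoe N, Lp.coeFn_sub L (∑ k ∈ Finset.range N, c k • ζ k)] with ω h1 h2
    rw [h2, Pi.sub_apply, h1]
  refine ⟨L, Lp.memLp L, ?_, ?_⟩
  · have h0 : Tendsto (fun N => L - ∑ k ∈ Finset.range N, c k • ζ k) atTop
        (nhds (L - L)) := tendsto_const_nhds.sub hLt
    rw [sub_self] at h0
    have h1 : Tendsto (fun N => ‖L - ∑ k ∈ Finset.range N, c k • ζ k‖₊) atTop (nhds 0) := by
      simpa using h0.nnnorm
    have key : Tendsto (fun N => (‖L - ∑ k ∈ Finset.range N, c k • ζ k‖₊ : ℝ≥0∞)) atTop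
        (nhds 0) := by
      rw [← ENNReal.coe_zero]
      exact ENNReal.tendsto_coe.mpr h1
    exact (show Tendsto (fun N => eLpNorm (fun ω => L ω - ∑ k ∈ Finset.range N, c k * ξ k ω) 2 P)
      atTop (nhds 0) by simpa only [hdiff] using key)
  · have hcont1 : Continuous fun x : ℝ => Complex.exp (Complex.I * (x : ℂ)) := by fun_prop
    have hmeasS : ∀ N, Measurable (fun ω => ∑ k ∈ Finset.range N, c k * ξ k ω) := by
      intro N
      exact Finset.measurable_sum _ fun k _ => (hmeas k).const_mul (c k)
    have hchar : ∀ N, ∫ ω, Complex.exp (Complex.I *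
          ((∑ k ∈ Finset.range N, c k * ξ k ω : ℝ) : ℂ)) ∂P
        = Complex.exp (-(((∑ k ∈ Finset.range N, c k ^ 2 : ℝ)) : ℂ) / 2) := by
      intro N
      induction N with
      | zero => simp
      | succ N ih =>
        have hsingle : ∫ ω, Complex.exp (Complex.I * ((c N * ξ N ω : ℝ) : ℂ)) ∂P
            = Complex.exp (-((c N : ℂ)^2)/2) := by
          have hF : AEStronglyMeasurable
              (fun x : ℝ => Complex.exp (Complex.I * ((c N * x : ℝ) : ℂ)))
              (Measure.map (ξ N) P) :=
            (by fun_prop :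
              Continuous fun x : ℝ => Complex.exp (Complex.I * ((c N * x : ℝ) : ℂ))).aestronglyMeasurable
          have h := integral_map (μ := P) (hmeas N).aemeasurable hF
          rw [hgauss N] at h
          rw [← h, gaussCharFun (c N)]
        have hη : ProbabilityTheory.iIndepFun
            (fun k ω => c k * ξ k ω) P :=
          hindep.comp (fun k x => c k * x) (fun k => measurable_id.const_mul (c k))
        have hAB : ProbabilityTheory.IndepFun (fun ω => ∑ k ∈ Finset.range N, c k * ξ k ω)
            (fun ω => c N * ξ N ω) P := by
          have h := hη.indepFun_sum_range_succ (fun k => (hmeas k).const_mul (c k)) N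
          have heq : (∑ j ∈ Finset.range N, fun ω => c j * ξ j ω)
              = fun ω => ∑ k ∈ Finset.range N, c k * ξ k ω := by
            funext ω; simp [Finset.sum_apply]
          rwa [heq] at h
        calc ∫ ω, Complex.exp (Complex.I *
              ((∑ k ∈ Finset.range (N+1), c k * ξ k ω : ℝ) : ℂ)) ∂P
            = ∫ ω, Complex.exp (Complex.I *
              (((∑ k ∈ Finset.range N, c k * ξ k ω) + c N * ξ N ω : ℝ) : ℂ)) ∂P := by
              simp_rw [Finset.sum_range_succ]
          _ = (∫ ω, Complex.exp (Complex.I *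
                ((∑ k ∈ Finset.range N, c k * ξ k ω : ℝ) : ℂ)) ∂P)
              * ∫ ω, Complex.exp (Complex.I * ((c N * ξ N ω : ℝ) : ℂ)) ∂P :=
            indep_cexp (hmeasS N) ((hmeas N).const_mul (c N)) hAB
          _ = Complex.exp (-(((∑ k ∈ Finset.range (N+1), c k ^ 2 : ℝ)) : ℂ) / 2) := by
              rw [ih, hsingle, ← Complex.exp_add]
              congr 1
              push_cast [Finset.sum_range_succ]
              ring
    have hTendE : Tendsto (fun N => eLpNorm
        (fun ω => L ω - ∑ k ∈ Finset.range N, c k * ξ k ω) 2 P) atTop (nhds 0) := by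
      have h0 : Tendsto (fun N => L - ∑ k ∈ Finset.range N, c k • ζ k) atTop
          (nhds (L - L)) := tendsto_const_nhds.sub hLt
      rw [sub_self] at h0
      have h1 : Tendsto (fun N => ‖L - ∑ k ∈ Finset.range N, c k • ζ k‖₊) atTop (nhds 0) := by
        simpa using h0.nnnorm
      have key : Tendsto (fun N => (‖L - ∑ k ∈ Finset.range N, c k • ζ k‖₊ : ℝ≥0∞)) atTop
          (nhds 0) := by
        rw [← ENNReal.coe_zero]
        exact ENNReal.tendsto_coe.mpr h1
      simpa only [hdiff] using key
    have hswap : ∀ N, eLpNorm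
        ((fun ω => ∑ k ∈ Finset.range N, c k * ξ k ω) - fun ω => L ω) 2 P
        = eLpNorm (fun ω => L ω - ∑ k ∈ Finset.range N, c k * ξ k ω) 2 P := by
      intro N
      rw [← eLpNorm_neg]
      congr 1
      funext ω
      simp
    have htim : TendstoInMeasure P (fun N ω => ∑ k ∈ Finset.range N, c k * ξ k ω) atTop L := by
      refine tendstoInMeasure_of_tendsto_eLpNorm (p := 2) (by norm_num)
        (fun N => (hmeasS N).aestronglyMeasurable) (Lp.aestronglyMeasurable L) ?_
      simpa only [hswap] using hTendE
    obtain ⟨ns, hns_mono, hns_ae⟩ := htim.exists_seq_tendsto_ae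
    have hlim1 : Tendsto (fun j => ∫ ω, Complex.exp (Complex.I *
          ((∑ k ∈ Finset.range (ns j), c k * ξ k ω : ℝ) : ℂ)) ∂P) atTop
        (nhds (∫ ω, Complex.exp (Complex.I * (L ω : ℂ)) ∂P)) := by
      refine tendsto_integral_of_dominated_convergence (fun _ => 1) ?_ ?_ ?_ ?_
      · intro j
        exact ((hcont1.measurable).comp (hmeasS (ns j))).aestronglyMeasurable
      · exact integrable_const 1
      · intro j
        refine Eventually.of_forall fun ω => ?_
        simp [Complex.norm_exp, Complex.mul_re]
      · filter_upwards [hns_ae] with ω hω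
        exact (hcont1.tendsto (L ω)).comp hω
    have hlim2 : Tendsto (fun j => Complex.exp
          (-(((∑ k ∈ Finset.range (ns j), c k ^ 2 : ℝ)) : ℂ) / 2)) atTop
        (nhds (Complex.exp (-((‖v‖^2 : ℝ) : ℂ)/2))) := by
      have h0 : Tendsto (fun N => ∑ k ∈ Finset.range N, c k ^ 2) atTop (nhds (‖v‖^2)) :=
        hsum.tendsto_sum_nat
      have h1 := h0.comp hns_mono.tendsto_atTop
      have hcont2 : Continuous fun x : ℝ => Complex.exp (-(x : ℂ)/2) := by fun_prop
      exact (hcont2.tendsto _).comp h1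
    have hfinal : ∫ ω, Complex.exp (Complex.I * (L ω : ℂ)) ∂P
        = Complex.exp (-((‖v‖^2:ℝ):ℂ)/2) := by
      have h := hlim1
      simp only [hchar] at h
      exact tendsto_nhds_unique h hlim2
    rw [hfinal]
    congr 1
    push_cast
    ring
end

section
/- Let H ∈ (0,1/2), T > 0, let X be a separable real Hilbert space, and let α ∈ (1/2−H, 1/2), β > 0, C > 0. Suppose f : (0,T] → X is strongly measurable and satisfies ‖f(s)‖ ≤ C e^{−βs} for all s ∈ (0,T] and ‖f(t)−f(s)‖ ≤ C (t−s)^α s^{−α} e^{−βs} for all 0 < s ≤ t ≤ T. Then all three of the following integrals are finite: (1) ∫₀ᵀ ‖f(s)‖² (T−s)^{2H−1} ds < ∞; (2) ∫₀ᵀ ‖f(s)‖² s^{2H−1} ds < ∞; (3) ∫₀ᵀ ( ∫ₛᵀ ‖f(t)−f(s)‖ (t−s)^{H−3/2} dt )² ds ≤ C² (2β)^{2α−1} Γ(1−2α) (H+α−1/2)^{−2} T^{2(H+α−1/2)} < ∞. -/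
open MeasureTheory Set
open scoped ENNReal

/-- Auxiliary: a set lintegral of `ofReal ∘ g` is finite if `g` is bounded on the set by an
integrable function. -/
private lemma aux_lt_top {T : ℝ} {g b : ℝ → ℝ} (hb : IntegrableOn b (Ioc 0 T))
    (h : ∀ s ∈ Ioc (0 : ℝ) T, g s ≤ b s) :
    (∫⁻ s in Ioc (0 : ℝ) T, ENNReal.ofReal (g s)) < ⊤ := by
  have h1 : (∫⁻ s in Ioc (0 : ℝ) T, ENNReal.ofReal (g s))
      ≤ ∫⁻ s in Ioc (0 : ℝ) T, (‖b s‖₊ : ℝ≥0∞) := by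
    refine lintegral_mono_ae ?_
    filter_upwards [ae_restrict_mem measurableSet_Ioc] with s hs
    exact le_trans (ENNReal.ofReal_le_ofReal (h s hs)) (Real.ofReal_le_enorm _)
  exact lt_of_le_of_lt h1 hb.2

/-- Auxiliary: the exact value of `∫ t in Ioc s T, (t - s) ^ (γ - 1)` for `0 < γ`. -/
private lemma aux_inner_integral {s T γ : ℝ} (hγ : 0 < γ) (hsT : s ≤ T) :
    ∫ t in Ioc s T, (t - s) ^ (γ - 1) = (T - s) ^ γ / γ := by
  rw [← intervalIntegral.integral_of_le hsT]
  have := intervalIntegral.integral_comp_sub_right (a := s) (b := T)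
    (fun u : ℝ => u ^ (γ - 1)) s
  rw [this, sub_self]
  rw [integral_rpow (Or.inl (by linarith))]
  rw [Real.zero_rpow (by linarith : γ - 1 + 1 ≠ 0)]
  rw [show γ - 1 + 1 = γ by ring]
  ring

/-- Auxiliary: integrability of `t ↦ (t - s) ^ r` on `Ioc s T` for `-1 < r`. -/
private lemma aux_inner_integrable {s T r : ℝ} (hr : (-1 : ℝ) < r) (hsT : s ≤ T) :
    IntegrableOn (fun t => (t - s) ^ r) (Ioc s T) := by
  have h := (intervalIntegral.intervalIntegrable_rpow' (a := 0) (b := T - s) hr).comp_sub_right s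
  rw [zero_add, sub_add_cancel] at h
  exact (intervalIntegrable_iff_integrableOn_Ioc_of_le hsT).mp h

/-- Auxiliary: integrability of `x ↦ x ^ (a - 1) * exp (-(r * x))` on `Ioi 0`. -/
private lemma aux_gamma_integrable {a r : ℝ} (ha : 0 < a) (hr : 0 < r) :
    IntegrableOn (fun x : ℝ => x ^ (a - 1) * Real.exp (-(r * x))) (Ioi 0) := by
  have h0 : IntegrableOn (fun x : ℝ => Real.exp (-x) * x ^ (a - 1)) (Ioi 0) :=
    Real.GammaIntegral_convergent ha
  have h1 : IntegrableOn (fun x : ℝ => Real.exp (-(r * x)) * (r * x) ^ (a - 1)) (Ioi 0) := by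
    have := (integrableOn_Ioi_comp_mul_left_iff
      (fun x : ℝ => Real.exp (-x) * x ^ (a - 1)) 0 hr).mpr (by simpa using h0)
    simpa using this
  have h2 : IntegrableOn
      (fun x : ℝ => r ^ (1 - a) * (Real.exp (-(r * x)) * (r * x) ^ (a - 1))) (Ioi 0) :=
    h1.const_mul _
  refine h2.congr_fun (fun x hx => ?_) measurableSet_Ioi
  have hx0 : (0 : ℝ) < x := hx
  dsimp only
  rw [Real.mul_rpow hr.le hx0.le]
  rw [show r ^ (1 - a) * (Real.exp (-(r * x)) * (r ^ (a - 1) * x ^ (a - 1)))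
      = (r ^ (1 - a) * r ^ (a - 1)) * (x ^ (a - 1) * Real.exp (-(r * x))) by ring]
  rw [← Real.rpow_add hr, show (1 - a) + (a - 1) = 0 by ring, Real.rpow_zero, one_mul]

/-- Integrability estimates for Hölder-continuous, exponentially decaying functions,
as needed for `s ↦ i* C* S*(s) v*` with an analytic semigroup of negative type
and `H < 1/2`. -/
theorem statement9 (H T : ℝ) (hH : H ∈ Set.Ioo (0 : ℝ) (1 / 2)) (hT : 0 < T)
    (X : Type*) [NormedAddCommGroup X]
    (α β C : ℝ) (hα : α ∈ Set.Ioo (1 / 2 - H) (1 / 2)) (hβ : 0 < β) (hC : 0 < C)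
    (f : ℝ → X) (hf : AEStronglyMeasurable f (volume.restrict (Set.Ioc 0 T)))
    (hbd : ∀ s ∈ Set.Ioc (0 : ℝ) T, ‖f s‖ ≤ C * Real.exp (-β * s))
    (hHol : ∀ s t : ℝ, 0 < s → s ≤ t → t ≤ T →
      ‖f t - f s‖ ≤ C * (t - s) ^ α * s ^ (-α) * Real.exp (-β * s)) :
    (∫⁻ s in Set.Ioc (0 : ℝ) T, ENNReal.ofReal (‖f s‖ ^ 2 * (T - s) ^ (2 * H - 1))) < ⊤ ∧
    (∫⁻ s in Set.Ioc (0 : ℝ) T, ENNReal.ofReal (‖f s‖ ^ 2 * s ^ (2 * H - 1))) < ⊤ ∧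
    (∫⁻ s in Set.Ioc (0 : ℝ) T,
        (∫⁻ t in Set.Ioc s T, ENNReal.ofReal (‖f t - f s‖ * (t - s) ^ (H - 3 / 2))) ^ 2)
      ≤ ENNReal.ofReal (C ^ 2 * (2 * β) ^ (2 * α - 1) * Real.Gamma (1 - 2 * α) *
          T ^ (2 * (H + α - 1 / 2)) / (H + α - 1 / 2) ^ 2) := by
  obtain ⟨hH0, hH2⟩ := hH
  obtain ⟨hα1, hα2⟩ := hα
  have hHexp : (-1 : ℝ) < 2 * H - 1 := by linarith
  -- norm-squared bound
  have hnormsq : ∀ s ∈ Ioc (0 : ℝ) T, ‖f s‖ ^ 2 ≤ C ^ 2 := by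
    intro s hs
    have h1 : ‖f s‖ ≤ C := by
      have he : Real.exp (-β * s) ≤ 1 := by
        rw [Real.exp_le_one_iff]
        nlinarith [hs.1]
      nlinarith [hbd s hs, Real.exp_pos (-β * s)]
    nlinarith [norm_nonneg (f s)]
  -- Part 1
  have part1 : (∫⁻ s in Ioc (0 : ℝ) T,
      ENNReal.ofReal (‖f s‖ ^ 2 * (T - s) ^ (2 * H - 1))) < ⊤ := by
    refine aux_lt_top (b := fun s => C ^ 2 * (T - s) ^ (2 * H - 1)) ?_ ?_
    · have h := ((intervalIntegral.intervalIntegrable_rpow' (a := 0) (b := T) hHexp).comp_sub_left T)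
      rw [sub_zero, sub_self] at h
      exact ((intervalIntegrable_iff_integrableOn_Ioc_of_le hT.le).mp h.symm).const_mul _
    · intro s hs
      exact mul_le_mul_of_nonneg_right (hnormsq s hs)
        (Real.rpow_nonneg (by linarith [hs.2]) _)
  -- Part 2
  have part2 : (∫⁻ s in Ioc (0 : ℝ) T,
      ENNReal.ofReal (‖f s‖ ^ 2 * s ^ (2 * H - 1))) < ⊤ := by
    refine aux_lt_top (b := fun s => C ^ 2 * s ^ (2 * H - 1)) ?_ ?_
    · exact ((intervalIntegrable_iff_integrableOn_Ioc_of_le hT.le).mp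
        (intervalIntegral.intervalIntegrable_rpow' hHexp)).const_mul _
    · intro s hs
      exact mul_le_mul_of_nonneg_right (hnormsq s hs) (Real.rpow_nonneg hs.1.le _)
  refine ⟨part1, part2, ?_⟩
  -- Part 3
  set γ : ℝ := H + α - 1 / 2 with hγdef
  have hγ : 0 < γ := by simp only [hγdef]; linarith
  clear_value γ
  have ha : 0 < 1 - 2 * α := by linarith
  have hr : 0 < 2 * β := by linarith
  -- inner integral bound
  have inner_bd : ∀ s ∈ Ioc (0 : ℝ) T,
      (∫⁻ t in Ioc s T, ENNReal.ofReal (‖f t - f s‖ * (t - s) ^ (H - 3 / 2)))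
        ≤ ENNReal.ofReal ((C * s ^ (-α) * Real.exp (-β * s)) * (T ^ γ / γ)) := by
    intro s hs
    obtain ⟨hs0, hsT⟩ := hs
    set K : ℝ := C * s ^ (-α) * Real.exp (-β * s) with hKdef
    have hK : 0 ≤ K := by positivity
    have step1 : (∫⁻ t in Ioc s T, ENNReal.ofReal (‖f t - f s‖ * (t - s) ^ (H - 3 / 2)))
        ≤ ∫⁻ t in Ioc s T, ENNReal.ofReal (K * (t - s) ^ (γ - 1)) := by
      refine lintegral_mono_ae ?_
      filter_upwards [ae_restrict_mem measurableSet_Ioc] with t ht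
      refine ENNReal.ofReal_le_ofReal ?_
      have hts : 0 < t - s := sub_pos.mpr ht.1
      have h1 := hHol s t hs0 ht.1.le ht.2
      have hrw : (t - s) ^ α * (t - s) ^ (H - 3 / 2) = (t - s) ^ (γ - 1) := by
        rw [← Real.rpow_add hts]
        congr 1
        simp only [hγdef]; ring
      calc ‖f t - f s‖ * (t - s) ^ (H - 3 / 2)
          ≤ (C * (t - s) ^ α * s ^ (-α) * Real.exp (-β * s)) * (t - s) ^ (H - 3 / 2) :=
            mul_le_mul_of_nonneg_right h1 (Real.rpow_nonneg hts.le _)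
        _ = K * ((t - s) ^ α * (t - s) ^ (H - 3 / 2)) := by rw [hKdef]; ring
        _ = K * (t - s) ^ (γ - 1) := by rw [hrw]
    have step2 : (∫⁻ t in Ioc s T, ENNReal.ofReal (K * (t - s) ^ (γ - 1)))
        = ENNReal.ofReal K * ∫⁻ t in Ioc s T, ENNReal.ofReal ((t - s) ^ (γ - 1)) := by
      simp_rw [ENNReal.ofReal_mul hK]
      exact lintegral_const_mul' _ _ ENNReal.ofReal_ne_top
    have step3 : (∫⁻ t in Ioc s T, ENNReal.ofReal ((t - s) ^ (γ - 1)))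
        = ENNReal.ofReal ((T - s) ^ γ / γ) := by
      rw [← ofReal_integral_eq_lintegral_ofReal (aux_inner_integrable (by linarith) hsT) ?_]
      · rw [aux_inner_integral hγ hsT]
      · filter_upwards [ae_restrict_mem measurableSet_Ioc] with t ht
        exact Real.rpow_nonneg (by linarith [ht.1]) _
    calc (∫⁻ t in Ioc s T, ENNReal.ofReal (‖f t - f s‖ * (t - s) ^ (H - 3 / 2)))
        ≤ ENNReal.ofReal K * ENNReal.ofReal ((T - s) ^ γ / γ) := by
          rw [← step3, ← step2]; exact step1
      _ ≤ ENNReal.ofReal K * ENNReal.ofReal (T ^ γ / γ) := by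
          refine mul_le_mul_right (ENNReal.ofReal_le_ofReal ?_) _
          refine div_le_div_of_nonneg_right ?_ hγ.le
          exact Real.rpow_le_rpow (by linarith) (by linarith) hγ.le
      _ = ENNReal.ofReal (K * (T ^ γ / γ)) := (ENNReal.ofReal_mul hK).symm
  -- squared pointwise bound
  set D : ℝ := C ^ 2 * T ^ (2 * γ) / γ ^ 2 with hDdef
  have sq_bd : ∀ s ∈ Ioc (0 : ℝ) T,
      (∫⁻ t in Ioc s T, ENNReal.ofReal (‖f t - f s‖ * (t - s) ^ (H - 3 / 2))) ^ 2
        ≤ ENNReal.ofReal (D * (s ^ ((1 - 2 * α) - 1) * Real.exp (-(2 * β * s)))) := by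
    intro s hs
    have hs0 : (0 : ℝ) < s := hs.1
    have hKnn : (0 : ℝ) ≤ C * s ^ (-α) * Real.exp (-β * s) * (T ^ γ / γ) := by positivity
    calc (∫⁻ t in Ioc s T, ENNReal.ofReal (‖f t - f s‖ * (t - s) ^ (H - 3 / 2))) ^ 2
        ≤ ENNReal.ofReal (C * s ^ (-α) * Real.exp (-β * s) * (T ^ γ / γ)) ^ 2 :=
          pow_le_pow_left' (inner_bd s hs) 2
      _ = ENNReal.ofReal ((C * s ^ (-α) * Real.exp (-β * s) * (T ^ γ / γ)) ^ 2) :=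
          (ENNReal.ofReal_pow hKnn 2).symm
      _ = ENNReal.ofReal (D * (s ^ ((1 - 2 * α) - 1) * Real.exp (-(2 * β * s)))) := by
          congr 1
          have e1 : (s ^ (-α)) ^ 2 = s ^ ((1 - 2 * α) - 1) := by
            rw [← Real.rpow_natCast (s ^ (-α)) 2, ← Real.rpow_mul hs0.le]
            congr 1
            push_cast; ring
          have e2 : Real.exp (-β * s) ^ 2 = Real.exp (-(2 * β * s)) := by
            rw [sq, ← Real.exp_add]
            congr 1; ring
          have e3 : (T ^ γ) ^ 2 = T ^ (2 * γ) := by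
            rw [← Real.rpow_natCast (T ^ γ) 2, ← Real.rpow_mul hT.le]
            congr 1
            push_cast; ring
          calc (C * s ^ (-α) * Real.exp (-β * s) * (T ^ γ / γ)) ^ 2
              = C ^ 2 * (T ^ γ) ^ 2 / γ ^ 2
                * ((s ^ (-α)) ^ 2 * Real.exp (-β * s) ^ 2) := by ring
            _ = D * (s ^ ((1 - 2 * α) - 1) * Real.exp (-(2 * β * s))) := by
                rw [e1, e2, e3, hDdef]
  -- the Gamma integral
  have hD : 0 ≤ D := by positivity
  have gamma_int : (∫⁻ s in Ioi (0 : ℝ),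
      ENNReal.ofReal (s ^ ((1 - 2 * α) - 1) * Real.exp (-(2 * β * s))))
      = ENNReal.ofReal ((1 / (2 * β)) ^ (1 - 2 * α) * Real.Gamma (1 - 2 * α)) := by
    rw [← ofReal_integral_eq_lintegral_ofReal (aux_gamma_integrable ha hr) ?_]
    · rw [Real.integral_rpow_mul_exp_neg_mul_Ioi ha hr]
    · filter_upwards [ae_restrict_mem measurableSet_Ioi] with x hx
      have : (0 : ℝ) < x := hx
      positivity
  -- put everything together
  calc (∫⁻ s in Ioc (0 : ℝ) T,
        (∫⁻ t in Ioc s T, ENNReal.ofReal (‖f t - f s‖ * (t - s) ^ (H - 3 / 2))) ^ 2)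
      ≤ ∫⁻ s in Ioc (0 : ℝ) T,
          ENNReal.ofReal (D * (s ^ ((1 - 2 * α) - 1) * Real.exp (-(2 * β * s)))) := by
        refine lintegral_mono_ae ?_
        filter_upwards [ae_restrict_mem measurableSet_Ioc] with s hs
        exact sq_bd s hs
    _ ≤ ∫⁻ s in Ioi (0 : ℝ),
          ENNReal.ofReal (D * (s ^ ((1 - 2 * α) - 1) * Real.exp (-(2 * β * s)))) :=
        lintegral_mono_set Ioc_subset_Ioi_self
    _ = ENNReal.ofReal D * ∫⁻ s in Ioi (0 : ℝ),
          ENNReal.ofReal (s ^ ((1 - 2 * α) - 1) * Real.exp (-(2 * β * s))) := by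
        simp_rw [ENNReal.ofReal_mul hD]
        exact lintegral_const_mul' _ _ ENNReal.ofReal_ne_top
    _ = ENNReal.ofReal (D * ((1 / (2 * β)) ^ (1 - 2 * α) * Real.Gamma (1 - 2 * α))) := by
        rw [gamma_int, ← ENNReal.ofReal_mul hD]
    _ = ENNReal.ofReal (C ^ 2 * (2 * β) ^ (2 * α - 1) * Real.Gamma (1 - 2 * α) *
          T ^ (2 * γ) / γ ^ 2) := by
        congr 1
        have hb2 : (1 / (2 * β)) ^ (1 - 2 * α) = (2 * β) ^ (2 * α - 1) := by
          rw [one_div, Real.inv_rpow (by linarith : (0:ℝ) ≤ 2 * β),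
            ← Real.rpow_neg (by linarith : (0:ℝ) ≤ 2 * β)]
          congr 1; ring
        rw [hDdef, hb2]
        ring
end

section
/- Let H ∈ (1/2,1), λ > 0 and T > 0. Then ∫₀ᵀ ∫₀ᵀ e^{−λ t} e^{−λ s} |s−t|^{2H−2} ds dt ≤ Γ(2H−1)/λ^{2H}. -/
open MeasureTheory Set
open scoped ENNReal

private lemma gamma_lintegral {a l : ℝ} (ha : 0 < a) (hl : 0 < l) :
    ∫⁻ u in Set.Ioi (0:ℝ), ENNReal.ofReal (Real.exp (-l * u) * u ^ (a - 1))
      = ENNReal.ofReal ((1 / l) ^ a * Real.Gamma a) := by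
  have hint : IntegrableOn (fun u : ℝ => u ^ (a - 1) * Real.exp (-(l * u))) (Ioi 0) := by
    have h0 : IntegrableOn (fun u : ℝ => Real.exp (-u) * u ^ (a - 1)) (Ioi 0) :=
      Real.GammaIntegral_convergent ha
    have h1 : IntegrableOn (fun x : ℝ => Real.exp (-(l * x)) * (l * x) ^ (a - 1)) (Ioi 0) := by
      have := (integrableOn_Ioi_comp_mul_left_iff
        (fun u : ℝ => Real.exp (-u) * u ^ (a - 1)) 0 hl).mpr (by simpa using h0)
      simpa using this
    have h2 : IntegrableOn
        (fun x : ℝ => (l ^ (a - 1))⁻¹ * (Real.exp (-(l * x)) * (l * x) ^ (a - 1))) (Ioi 0) :=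
      h1.const_mul _
    refine h2.congr_fun (fun x hx => ?_) measurableSet_Ioi
    have hx0 : (0:ℝ) < x := hx
    beta_reduce
    rw [Real.mul_rpow hl.le hx0.le]
    field_simp [(Real.rpow_pos_of_pos hl (a-1)).ne']
  rw [← MeasureTheory.ofReal_integral_eq_lintegral_ofReal]
  · rw [← Real.integral_rpow_mul_exp_neg_mul_Ioi ha hl]
    congr 1
    refine setIntegral_congr_fun measurableSet_Ioi fun x hx => ?_
    rw [neg_mul]; ring
  · exact hint.congr_fun (fun x hx => by rw [neg_mul]; ring) measurableSet_Ioi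
  · filter_upwards [self_mem_ae_restrict measurableSet_Ioi] with x hx
    exact mul_nonneg (Real.exp_pos _).le (Real.rpow_nonneg (le_of_lt hx) _)

private lemma translate_lintegral (f : ℝ → ℝ≥0∞) (s : ℝ) :
    ∫⁻ t in Set.Ioi s, f (t - s) = ∫⁻ u in Set.Ioi (0:ℝ), f u := by
  have h : ∀ t : ℝ, (Ioi s).indicator (fun t => f (t - s)) t
      = ((Ioi (0:ℝ)).indicator f) (t + -s) := by
    intro t
    by_cases ht : t ∈ Ioi s
    · rw [indicator_of_mem ht, indicator_of_mem (by simpa [sub_pos] using ht), sub_eq_add_neg]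
    · rw [indicator_of_notMem ht, indicator_of_notMem]
      simpa [sub_pos] using ht
  rw [← lintegral_indicator measurableSet_Ioi, ← lintegral_indicator measurableSet_Ioi]
  simp_rw [h]
  exact lintegral_add_right_eq_self _ _

private lemma tail_bound {H l : ℝ} (hH : H ∈ Set.Ioo (1 / 2 : ℝ) 1) (hl : 0 < l) (c : ℝ) :
    ∫⁻ x in Set.Ioi c,
        ENNReal.ofReal (Real.exp (-l * c) * Real.exp (-l * x) * |x - c| ^ (2 * H - 2))
      ≤ ENNReal.ofReal (Real.exp (-(2 * l) * c)) *
          ENNReal.ofReal ((1 / l) ^ (2 * H - 1) * Real.Gamma (2 * H - 1)) := by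
  have ha : 0 < 2 * H - 1 := by linarith [hH.1]
  have key : ∀ x ∈ Ioi c,
      ENNReal.ofReal (Real.exp (-l * c) * Real.exp (-l * x) * |x - c| ^ (2 * H - 2))
        = ENNReal.ofReal (Real.exp (-(2 * l) * c)) *
            ENNReal.ofReal (Real.exp (-l * (x - c)) * (x - c) ^ (2 * H - 2)) := by
    intro x hx
    rw [← ENNReal.ofReal_mul (Real.exp_pos _).le]
    congr 1
    have hxc : c < x := hx
    have e1 : Real.exp (-l * c) * Real.exp (-l * x)
        = Real.exp (-(2 * l) * c) * Real.exp (-l * (x - c)) := by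
      rw [← Real.exp_add, ← Real.exp_add]; congr 1; ring
    rw [abs_of_pos (by linarith : (0:ℝ) < x - c)]
    calc Real.exp (-l * c) * Real.exp (-l * x) * (x - c) ^ (2 * H - 2)
        = Real.exp (-(2 * l) * c) * Real.exp (-l * (x - c)) * (x - c) ^ (2 * H - 2) := by
          rw [e1]
      _ = Real.exp (-(2 * l) * c) * (Real.exp (-l * (x - c)) * (x - c) ^ (2 * H - 2)) := by
          rw [mul_assoc]
  refine le_of_eq ?_
  calc ∫⁻ x in Set.Ioi c,
        ENNReal.ofReal (Real.exp (-l * c) * Real.exp (-l * x) * |x - c| ^ (2 * H - 2))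
      = ∫⁻ x in Set.Ioi c, ENNReal.ofReal (Real.exp (-(2 * l) * c)) *
            ENNReal.ofReal (Real.exp (-l * (x - c)) * (x - c) ^ (2 * H - 2)) :=
        setLIntegral_congr_fun measurableSet_Ioi key
    _ = ENNReal.ofReal (Real.exp (-(2 * l) * c)) *
          ∫⁻ x in Set.Ioi c, ENNReal.ofReal (Real.exp (-l * (x - c)) * (x - c) ^ (2 * H - 2)) :=
        lintegral_const_mul' _ _ ENNReal.ofReal_ne_top
    _ = ENNReal.ofReal (Real.exp (-(2 * l) * c)) *
          ENNReal.ofReal ((1 / l) ^ (2 * H - 1) * Real.Gamma (2 * H - 1)) := by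
        rw [translate_lintegral (fun u => ENNReal.ofReal (Real.exp (-l * u) * u ^ (2 * H - 2))) c]
        rw [show (2:ℝ) * H - 2 = (2 * H - 1) - 1 by ring, gamma_lintegral ha hl]

private lemma exp_lintegral_bound {c T : ℝ} (hc : 0 < c) :
    ∫⁻ t in Set.Icc (0:ℝ) T, ENNReal.ofReal (Real.exp (-c * t))
      ≤ ENNReal.ofReal (1 / c) := by
  calc ∫⁻ t in Set.Icc (0:ℝ) T, ENNReal.ofReal (Real.exp (-c * t))
      ≤ ∫⁻ t in Set.Ici (0:ℝ), ENNReal.ofReal (Real.exp (-c * t)) :=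
        lintegral_mono_set (fun x hx => hx.1)
    _ = ∫⁻ t in Set.Ioi (0:ℝ), ENNReal.ofReal (Real.exp (-c * t)) :=
        (setLIntegral_congr Ioi_ae_eq_Ici).symm
    _ = ENNReal.ofReal (1 / c) := by
        have := gamma_lintegral (a := 1) one_pos hc
        simp only [sub_self, Real.rpow_zero, mul_one, Real.rpow_one, Real.Gamma_one] at this
        exact this

/-- For `H > 1/2` and `λ > 0`:
`∫₀ᵀ∫₀ᵀ e^{-λt} e^{-λs} |s-t|^{2H-2} ds dt ≤ Γ(2H-1)/λ^{2H}`. -/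
theorem statement10 (H l T : ℝ) (hH : H ∈ Set.Ioo (1 / 2 : ℝ) 1) (hl : 0 < l) (hT : 0 < T) :
    (∫⁻ t in Set.Icc (0 : ℝ) T, ∫⁻ s in Set.Icc (0 : ℝ) T,
        ENNReal.ofReal (Real.exp (-l * t) * Real.exp (-l * s) * |s - t| ^ (2 * H - 2)))
      ≤ ENNReal.ofReal (Real.Gamma (2 * H - 1) / l ^ (2 * H)) := by
  obtain ⟨hH1, hH2⟩ := hH
  have ha : 0 < 2 * H - 1 := by linarith
  set F : ℝ → ℝ → ℝ≥0∞ := fun t s =>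
    ENNReal.ofReal (Real.exp (-l * t) * Real.exp (-l * s) * |s - t| ^ (2 * H - 2)) with hF
  have hFmeas : Measurable (Function.uncurry F) := by
    simp only [hF, Function.uncurry]
    fun_prop
  set G : ℝ → ℝ → ℝ≥0∞ := fun t s => (Set.Ici s).indicator (fun t' => F t' s) t with hG
  have hGmeas : Measurable (Function.uncurry G) := by
    have : Function.uncurry G = fun p : ℝ × ℝ =>
        if p.2 ≤ p.1 then Function.uncurry F p else 0 := by
      ext p
      simp only [Function.uncurry, hG, Set.indicator, mem_Ici]
    rw [this]
    exact Measurable.ite (measurableSet_le measurable_snd measurable_fst) hFmeas measurable_const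
  set C : ℝ≥0∞ := ENNReal.ofReal ((1 / l) ^ (2 * H - 1) * Real.Gamma (2 * H - 1)) with hC
  -- split the inner integral
  have hsplit : ∀ t ∈ Set.Icc (0:ℝ) T,
      ∫⁻ s in Set.Icc (0:ℝ) T, F t s
        = (∫⁻ s in Set.Icc (0:ℝ) T, G t s) + ∫⁻ s in Set.Ioc t T, F t s := by
    intro t ht
    have hdisj : Disjoint (Icc (0:ℝ) t) (Ioc t T) :=
      Set.disjoint_left.mpr fun x hx hx' => absurd hx.2 (not_le.mpr hx'.1)
    have h1 : ∫⁻ s in Set.Icc (0:ℝ) T, F t s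
        = (∫⁻ s in Set.Icc (0:ℝ) t, F t s) + ∫⁻ s in Set.Ioc t T, F t s := by
      rw [← Set.Icc_union_Ioc_eq_Icc ht.1 ht.2, lintegral_union measurableSet_Ioc hdisj]
    have h2 : (∫⁻ s in Set.Icc (0:ℝ) t, F t s) = ∫⁻ s in Set.Icc (0:ℝ) T, G t s := by
      have hGt : ∀ s : ℝ, G t s = (Iic t).indicator (fun s' => F t s') s := by
        intro s
        simp only [hG, Set.indicator, mem_Ici, mem_Iic]
      simp_rw [hGt]
      rw [lintegral_indicator measurableSet_Iic, Measure.restrict_restrict measurableSet_Iic]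
      congr 1
      rw [show Iic t ∩ Icc (0:ℝ) T = Icc 0 t from ?_]
      ext x
      simp only [mem_inter_iff, mem_Iic, mem_Icc]
      constructor
      · rintro ⟨hxt, hx0, _⟩; exact ⟨hx0, hxt⟩
      · rintro ⟨hx0, hxt⟩; exact ⟨hxt, hx0, hxt.trans ht.2⟩
    rw [h1, h2]
  have hsplit' : (∫⁻ t in Set.Icc (0 : ℝ) T, ∫⁻ s in Set.Icc (0 : ℝ) T, F t s)
      = (∫⁻ t in Set.Icc (0:ℝ) T, ∫⁻ s in Set.Icc (0:ℝ) T, G t s)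
        + ∫⁻ t in Set.Icc (0:ℝ) T, ∫⁻ s in Set.Ioc t T, F t s := by
    rw [← lintegral_add_left]
    · exact setLIntegral_congr_fun measurableSet_Icc hsplit
    · exact hGmeas.lintegral_prod_right
  -- bound for the tail integrals
  have htail : ∀ c ∈ Set.Icc (0:ℝ) T,
      (∫⁻ x in Set.Ioc c T, F c x) ≤ ENNReal.ofReal (Real.exp (-(2 * l) * c)) * C := by
    intro c hc
    refine le_trans (lintegral_mono_set Set.Ioc_subset_Ioi_self) ?_
    exact tail_bound ⟨hH1, hH2⟩ hl c
  -- the lower-triangle part, after swapping the order of integration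
  have hswap : (∫⁻ t in Set.Icc (0:ℝ) T, ∫⁻ s in Set.Icc (0:ℝ) T, G t s)
      = ∫⁻ s in Set.Icc (0:ℝ) T, ∫⁻ t in Set.Icc (0:ℝ) T, G t s :=
    lintegral_lintegral_swap hGmeas.aemeasurable
  have hlower : ∀ s ∈ Set.Icc (0:ℝ) T,
      (∫⁻ t in Set.Icc (0:ℝ) T, G t s) ≤ ENNReal.ofReal (Real.exp (-(2 * l) * s)) * C := by
    intro s hs
    have h3 : (∫⁻ t in Set.Icc (0:ℝ) T, G t s) = ∫⁻ t in Set.Ici s ∩ Set.Icc 0 T, F t s := by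
      simp only [hG]
      rw [lintegral_indicator measurableSet_Ici, Measure.restrict_restrict measurableSet_Ici]
    rw [h3]
    refine le_trans (lintegral_mono_set Set.inter_subset_left) ?_
    have heq : ∀ t : ℝ, F t s
        = ENNReal.ofReal (Real.exp (-l * s) * Real.exp (-l * t) * |t - s| ^ (2 * H - 2)) := by
      intro t
      simp only [hF]
      rw [abs_sub_comm]
      ring_nf
    calc (∫⁻ t in Set.Ici s, F t s)
        = ∫⁻ t in Set.Ioi s, F t s := (setLIntegral_congr Ioi_ae_eq_Ici).symm
      _ = ∫⁻ t in Set.Ioi s,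
            ENNReal.ofReal (Real.exp (-l * s) * Real.exp (-l * t) * |t - s| ^ (2 * H - 2)) := by
          simp_rw [heq]
      _ ≤ _ := tail_bound ⟨hH1, hH2⟩ hl s
  -- put things together
  have hexp : (∫⁻ t in Set.Icc (0:ℝ) T, ENNReal.ofReal (Real.exp (-(2 * l) * t)))
      ≤ ENNReal.ofReal (1 / (2 * l)) := exp_lintegral_bound (by linarith)
  have hbound1 : (∫⁻ t in Set.Icc (0:ℝ) T, ∫⁻ s in Set.Icc (0:ℝ) T, G t s)
      ≤ ENNReal.ofReal (1 / (2 * l)) * C := by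
    rw [hswap]
    calc (∫⁻ s in Set.Icc (0:ℝ) T, ∫⁻ t in Set.Icc (0:ℝ) T, G t s)
        ≤ ∫⁻ s in Set.Icc (0:ℝ) T, ENNReal.ofReal (Real.exp (-(2 * l) * s)) * C :=
          setLIntegral_mono_ae (by fun_prop) (Filter.Eventually.of_forall hlower)
      _ = (∫⁻ s in Set.Icc (0:ℝ) T, ENNReal.ofReal (Real.exp (-(2 * l) * s))) * C :=
          lintegral_mul_const' _ _ ENNReal.ofReal_ne_top
      _ ≤ ENNReal.ofReal (1 / (2 * l)) * C := mul_le_mul_left hexp C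
  have hbound2 : (∫⁻ t in Set.Icc (0:ℝ) T, ∫⁻ s in Set.Ioc t T, F t s)
      ≤ ENNReal.ofReal (1 / (2 * l)) * C := by
    calc (∫⁻ t in Set.Icc (0:ℝ) T, ∫⁻ s in Set.Ioc t T, F t s)
        ≤ ∫⁻ t in Set.Icc (0:ℝ) T, ENNReal.ofReal (Real.exp (-(2 * l) * t)) * C :=
          setLIntegral_mono_ae (by fun_prop) (Filter.Eventually.of_forall htail)
      _ = (∫⁻ t in Set.Icc (0:ℝ) T, ENNReal.ofReal (Real.exp (-(2 * l) * t))) * C :=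
          lintegral_mul_const' _ _ ENNReal.ofReal_ne_top
      _ ≤ ENNReal.ofReal (1 / (2 * l)) * C := mul_le_mul_left hexp C
  calc (∫⁻ t in Set.Icc (0 : ℝ) T, ∫⁻ s in Set.Icc (0 : ℝ) T, F t s)
      ≤ ENNReal.ofReal (1 / (2 * l)) * C + ENNReal.ofReal (1 / (2 * l)) * C := by
        rw [hsplit']; exact add_le_add hbound1 hbound2
    _ ≤ ENNReal.ofReal (Real.Gamma (2 * H - 1) / l ^ (2 * H)) := by
        rw [hC, ← ENNReal.ofReal_mul (by positivity), ← ENNReal.ofReal_add (by positivity)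
          (by positivity)]
        refine ENNReal.ofReal_le_ofReal ?_
        have hb : (0:ℝ) < l ^ (2 * H - 1) := Real.rpow_pos_of_pos hl _
        have h1 : (1 / l) ^ (2 * H - 1) = (l ^ (2 * H - 1))⁻¹ := by
          rw [one_div, Real.inv_rpow hl.le]
        have h2 : l ^ (2 * H) = l ^ (2 * H - 1) * l := by
          rw [← Real.rpow_add_one hl.ne' (2 * H - 1)]
          congr 1
          ring
        rw [h1, h2]
        refine le_of_eq ?_
        field_simp
        ring
end

section
/- Let H ∈ (0,1/2). There exists a constant c > 0 depending only on H such that for every λ > 0 and every T > 0, ∫₀ᵀ ( ∫ₛᵀ (e^{−λ s} − e^{−λ t}) (t−s)^{H−3/2} dt )² ds ≤ c·λ^{−2H}. -/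
open MeasureTheory Set
open scoped ENNReal

/-- For `H < 1/2` there is a constant `c > 0` depending only on `H` such that
`∫₀ᵀ (∫ₛᵀ (e^{-λs} - e^{-λt}) (t-s)^{H-3/2} dt)² ds ≤ c λ^{-2H}`. -/
theorem statement13 (H : ℝ) (hH : H ∈ Set.Ioo (0 : ℝ) (1 / 2)) :
    ∃ c > (0 : ℝ), ∀ l T : ℝ, 0 < l → 0 < T →
      (∫⁻ s in Set.Ioc (0 : ℝ) T,
          (∫⁻ t in Set.Ioc s T,
            ENNReal.ofReal ((Real.exp (-l * s) - Real.exp (-l * t)) * (t - s) ^ (H - 3 / 2))) ^ 2)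
        ≤ ENNReal.ofReal (c * l ^ (-(2 * H))) := by
  obtain ⟨hH0, hH2⟩ := hH
  have h1 : (0:ℝ) < H + 1/2 := by linarith
  have h2 : (0:ℝ) < 1/2 - H := by linarith
  set C : ℝ := 1 / (H + 1/2) + 1 / (1/2 - H) with hCdef
  have hC0 : 0 < C := by positivity
  refine ⟨C ^ 2 / 2, by positivity, ?_⟩
  intro l T hl hT
  have hlinv : (0:ℝ) < l⁻¹ := inv_pos.mpr hl
  set G : ℝ → ℝ := fun u => min (l * u) 1 * u ^ (H - 3/2) with hGdef
  -- key inner bound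
  have key : ∀ s : ℝ,
      (∫⁻ t in Set.Ioc s T,
        ENNReal.ofReal ((Real.exp (-l * s) - Real.exp (-l * t)) * (t - s) ^ (H - 3 / 2)))
        ≤ ENNReal.ofReal (C * l ^ (1/2 - H) * Real.exp (-l * s)) := by
    intro s
    have step1 : (∫⁻ t in Set.Ioc s T,
        ENNReal.ofReal ((Real.exp (-l * s) - Real.exp (-l * t)) * (t - s) ^ (H - 3 / 2)))
        ≤ ∫⁻ t in Set.Ioi s,
        ENNReal.ofReal ((Real.exp (-l * s) - Real.exp (-l * t)) * (t - s) ^ (H - 3 / 2)) :=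
      lintegral_mono_set Ioc_subset_Ioi_self
    have step2 : (∫⁻ t in Set.Ioi s,
        ENNReal.ofReal ((Real.exp (-l * s) - Real.exp (-l * t)) * (t - s) ^ (H - 3 / 2)))
        ≤ ∫⁻ t in Set.Ioi s, ENNReal.ofReal (Real.exp (-l * s) * G (t - s)) := by
      refine setLIntegral_mono' measurableSet_Ioi fun t ht => ?_
      have hts : 0 < t - s := sub_pos.mpr ht
      refine ENNReal.ofReal_le_ofReal ?_
      have hpow : 0 ≤ (t - s) ^ (H - 3/2) := Real.rpow_nonneg hts.le _
      have hexp : Real.exp (-l * s) - Real.exp (-l * t)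
          ≤ Real.exp (-l * s) * min (l * (t - s)) 1 := by
        have hsplit : Real.exp (-l * t) = Real.exp (-l * s) * Real.exp (-(l * (t - s))) := by
          rw [← Real.exp_add]; ring_nf
        rw [hsplit]
        have hmin : 1 - Real.exp (-(l * (t - s))) ≤ min (l * (t - s)) 1 := by
          refine le_min ?_ ?_
          · have := Real.add_one_le_exp (-(l * (t - s)))
            linarith
          · have := Real.exp_pos (-(l * (t - s)))
            linarith
        calc Real.exp (-l * s) - Real.exp (-l * s) * Real.exp (-(l * (t - s)))
            = Real.exp (-l * s) * (1 - Real.exp (-(l * (t - s)))) := by ring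
          _ ≤ Real.exp (-l * s) * min (l * (t - s)) 1 :=
            mul_le_mul_of_nonneg_left hmin (Real.exp_pos _).le
      calc (Real.exp (-l * s) - Real.exp (-l * t)) * (t - s) ^ (H - 3 / 2)
          ≤ (Real.exp (-l * s) * min (l * (t - s)) 1) * (t - s) ^ (H - 3/2) :=
            mul_le_mul_of_nonneg_right hexp hpow
        _ = Real.exp (-l * s) * G (t - s) := by rw [hGdef]; ring_nf
    have step3 : (∫⁻ t in Set.Ioi s, ENNReal.ofReal (Real.exp (-l * s) * G (t - s)))
        = ∫⁻ u in Set.Ioi (0:ℝ), ENNReal.ofReal (Real.exp (-l * s) * G u) := by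
      have h := (measurePreserving_add_right (volume : Measure ℝ) s).setLIntegral_comp_preimage_emb
        (measurableEmbedding_addRight s)
        (fun t => ENNReal.ofReal (Real.exp (-l * s) * G (t - s))) (Set.Ioi s)
      have hpre : (fun x => x + s) ⁻¹' Set.Ioi s = Set.Ioi (0:ℝ) := by
        ext x; simp
      rw [hpre] at h
      rw [← h]
      refine setLIntegral_congr_fun measurableSet_Ioi (fun x _ => ?_)
      simp
    have hsplitset : Set.Ioc (0:ℝ) l⁻¹ ∪ Set.Ioi l⁻¹ = Set.Ioi (0:ℝ) :=
      Ioc_union_Ioi_eq_Ioi hlinv.le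
    have step4 : (∫⁻ u in Set.Ioi (0:ℝ), ENNReal.ofReal (Real.exp (-l * s) * G u))
        = (∫⁻ u in Set.Ioc (0:ℝ) l⁻¹, ENNReal.ofReal (Real.exp (-l * s) * G u))
          + ∫⁻ u in Set.Ioi l⁻¹, ENNReal.ofReal (Real.exp (-l * s) * G u) := by
      rw [← hsplitset, lintegral_union measurableSet_Ioi (Ioc_disjoint_Ioi le_rfl)]
    -- piece 1
    have piece1 : (∫⁻ u in Set.Ioc (0:ℝ) l⁻¹, ENNReal.ofReal (Real.exp (-l * s) * G u))
        ≤ ENNReal.ofReal (Real.exp (-l * s) * (l ^ (1/2 - H) / (H + 1/2))) := by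
      have hb : (∫⁻ u in Set.Ioc (0:ℝ) l⁻¹, ENNReal.ofReal (Real.exp (-l * s) * G u))
          ≤ ∫⁻ u in Set.Ioc (0:ℝ) l⁻¹,
            ENNReal.ofReal (Real.exp (-l * s) * (l * u ^ (H - 1/2))) := by
        refine setLIntegral_mono' measurableSet_Ioc fun u hu => ?_
        refine ENNReal.ofReal_le_ofReal (mul_le_mul_of_nonneg_left ?_ (Real.exp_pos _).le)
        have hu0 : 0 < u := hu.1
        have hGle : G u ≤ (l * u) * u ^ (H - 3/2) := by
          rw [hGdef]
          exact mul_le_mul_of_nonneg_right (min_le_left _ _) (Real.rpow_nonneg hu0.le _)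
        refine hGle.trans (le_of_eq ?_)
        rw [mul_assoc]
        congr 1
        nth_rewrite 1 [← Real.rpow_one u]
        rw [← Real.rpow_add hu0]
        congr 1; ring
      refine hb.trans (le_of_eq ?_)
      have hint : IntegrableOn (fun u : ℝ => Real.exp (-l * s) * (l * u ^ (H - 1/2)))
          (Set.Ioc (0:ℝ) l⁻¹) := by
        have hii : IntervalIntegrable (fun u : ℝ => u ^ (H - 1/2)) volume 0 l⁻¹ :=
          intervalIntegral.intervalIntegrable_rpow' (by linarith)
        have h' := (intervalIntegrable_iff_integrableOn_Ioc_of_le hlinv.le).mp hii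
        exact (h'.const_mul l).const_mul _
      rw [← MeasureTheory.ofReal_integral_eq_lintegral_ofReal hint
        ((ae_restrict_iff' measurableSet_Ioc).mpr (ae_of_all _ fun u hu => by
          have := Real.rpow_nonneg hu.1.le (H - 1/2); positivity))]
      congr 1
      rw [MeasureTheory.integral_const_mul]
      rw [MeasureTheory.integral_const_mul]
      have hioc : (∫ u in Set.Ioc (0:ℝ) l⁻¹, u ^ (H - 1/2))
          = (l⁻¹) ^ (H + 1/2) / (H + 1/2) := by
        rw [← intervalIntegral.integral_of_le hlinv.le,
          integral_rpow (Or.inl (by linarith : (-1:ℝ) < H - 1/2))]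
        rw [Real.zero_rpow (by intro hc; linarith [hc])]
        have : H - 1/2 + 1 = H + 1/2 := by ring
        rw [this]; ring
      rw [hioc]
      congr 1
      rw [Real.inv_rpow hl.le, ← Real.rpow_neg hl.le, ← mul_div_assoc]
      congr 1
      nth_rewrite 1 [← Real.rpow_one l]
      rw [← Real.rpow_add hl]
      congr 1; ring
    -- piece 2
    have piece2 : (∫⁻ u in Set.Ioi l⁻¹, ENNReal.ofReal (Real.exp (-l * s) * G u))
        ≤ ENNReal.ofReal (Real.exp (-l * s) * (l ^ (1/2 - H) / (1/2 - H))) := by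
      have hb : (∫⁻ u in Set.Ioi l⁻¹, ENNReal.ofReal (Real.exp (-l * s) * G u))
          ≤ ∫⁻ u in Set.Ioi l⁻¹,
            ENNReal.ofReal (Real.exp (-l * s) * u ^ (H - 3/2)) := by
        refine setLIntegral_mono' measurableSet_Ioi fun u hu => ?_
        refine ENNReal.ofReal_le_ofReal (mul_le_mul_of_nonneg_left ?_ (Real.exp_pos _).le)
        have hu0 : 0 < u := lt_trans hlinv hu
        rw [hGdef]
        calc min (l * u) 1 * u ^ (H - 3/2) ≤ 1 * u ^ (H - 3/2) :=
            mul_le_mul_of_nonneg_right (min_le_right _ _) (Real.rpow_nonneg hu0.le _)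
          _ = u ^ (H - 3/2) := one_mul _
      refine hb.trans (le_of_eq ?_)
      have hint : IntegrableOn (fun u : ℝ => Real.exp (-l * s) * u ^ (H - 3/2))
          (Set.Ioi l⁻¹) :=
        (integrableOn_Ioi_rpow_of_lt (by linarith : H - 3/2 < -1) hlinv).const_mul _
      rw [← MeasureTheory.ofReal_integral_eq_lintegral_ofReal hint
        ((ae_restrict_iff' measurableSet_Ioi).mpr (ae_of_all _ fun u hu => by
          have hu0 : (0:ℝ) < u := lt_trans hlinv hu
          have := Real.rpow_nonneg hu0.le (H - 3/2); positivity))]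
      congr 1
      rw [MeasureTheory.integral_const_mul]
      rw [integral_Ioi_rpow_of_lt (by linarith : H - 3/2 < -1) hlinv]
      congr 1
      have e1 : H - 3/2 + 1 = -(1/2 - H) := by ring
      rw [e1, Real.inv_rpow hl.le, ← Real.rpow_neg hl.le, neg_neg, neg_div_neg_eq]
    calc (∫⁻ t in Set.Ioc s T,
        ENNReal.ofReal ((Real.exp (-l * s) - Real.exp (-l * t)) * (t - s) ^ (H - 3 / 2)))
        ≤ ∫⁻ u in Set.Ioi (0:ℝ), ENNReal.ofReal (Real.exp (-l * s) * G u) :=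
          (step1.trans step2).trans (le_of_eq step3)
      _ = (∫⁻ u in Set.Ioc (0:ℝ) l⁻¹, ENNReal.ofReal (Real.exp (-l * s) * G u))
          + ∫⁻ u in Set.Ioi l⁻¹, ENNReal.ofReal (Real.exp (-l * s) * G u) := step4
      _ ≤ ENNReal.ofReal (Real.exp (-l * s) * (l ^ (1/2 - H) / (H + 1/2)))
          + ENNReal.ofReal (Real.exp (-l * s) * (l ^ (1/2 - H) / (1/2 - H))) :=
          add_le_add piece1 piece2
      _ = ENNReal.ofReal (C * l ^ (1/2 - H) * Real.exp (-l * s)) := by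
          rw [← ENNReal.ofReal_add (by positivity) (by positivity)]
          congr 1
          rw [hCdef]
          ring
  -- main computation
  have hexpint : IntegrableOn (fun s : ℝ => (C * l ^ (1/2 - H)) ^ 2 * Real.exp (-(2*l) * s))
      (Set.Ioi (0:ℝ)) := (exp_neg_integrableOn_Ioi 0 (by positivity : (0:ℝ) < 2*l)).const_mul _
  have hI : (∫ s in Set.Ioi (0:ℝ), Real.exp (-(2*l) * s)) = (2*l)⁻¹ := by
    have h := integral_comp_mul_left_Ioi (fun x => Real.exp (-x)) 0
      (by positivity : (0:ℝ) < 2*l)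
    simp only [mul_zero, integral_exp_neg_Ioi, neg_zero, Real.exp_zero, smul_eq_mul,
      mul_one, neg_mul] at h ⊢
    exact h
  calc (∫⁻ s in Set.Ioc (0 : ℝ) T,
          (∫⁻ t in Set.Ioc s T,
            ENNReal.ofReal ((Real.exp (-l * s) - Real.exp (-l * t)) * (t - s) ^ (H - 3 / 2))) ^ 2)
      ≤ ∫⁻ s in Set.Ioc (0:ℝ) T,
          (ENNReal.ofReal (C * l ^ (1/2 - H) * Real.exp (-l * s))) ^ 2 :=
        lintegral_mono fun s => pow_le_pow_left' (key s) 2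
    _ = ∫⁻ s in Set.Ioc (0:ℝ) T,
          ENNReal.ofReal ((C * l ^ (1/2 - H)) ^ 2 * Real.exp (-(2*l) * s)) := by
        refine lintegral_congr fun s => ?_
        rw [← ENNReal.ofReal_pow (by positivity)]
        congr 1
        rw [mul_pow, sq (Real.exp _), ← Real.exp_add]
        congr 1; ring
    _ ≤ ∫⁻ s in Set.Ioi (0:ℝ),
          ENNReal.ofReal ((C * l ^ (1/2 - H)) ^ 2 * Real.exp (-(2*l) * s)) :=
        lintegral_mono_set Ioc_subset_Ioi_self
    _ = ENNReal.ofReal (∫ s in Set.Ioi (0:ℝ), (C * l ^ (1/2 - H)) ^ 2 * Real.exp (-(2*l) * s)) :=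
        (MeasureTheory.ofReal_integral_eq_lintegral_ofReal hexpint
          (ae_of_all _ fun s => by positivity)).symm
    _ = ENNReal.ofReal (C ^ 2 / 2 * l ^ (-(2 * H))) := by
        congr 1
        rw [MeasureTheory.integral_const_mul, hI]
        have hpow2 : l ^ (1/2 - H) * l ^ (1/2 - H) * l ^ (-1:ℝ) = l ^ (-(2*H)) := by
          rw [← Real.rpow_add hl, ← Real.rpow_add hl]
          congr 1; ring
        calc (C * l ^ (1/2 - H)) ^ 2 * (2*l)⁻¹
            = C ^ 2 / 2 * (l ^ (1/2 - H) * l ^ (1/2 - H) * l⁻¹) := by ring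
          _ = C ^ 2 / 2 * l ^ (-(2*H)) := by
              rw [← Real.rpow_neg_one l, hpow2]
end

section
/- Let H ∈ (0,1/2). There exists a constant c > 0 depending only on H such that for every a > 0, ∫₀ᵃ e^{−2(a−x)} ( ∫₀ˣ (1−e^{−y}) y^{H−3/2} dy )² dx ≤ c. -/
open MeasureTheory Set
open scoped ENNReal

/-- For `H < 1/2` there is a constant `c > 0` depending only on `H` such that for all `a > 0`:
`∫₀ᵃ e^{-2(a-x)} (∫₀ˣ (1-e^{-y}) y^{H-3/2} dy)² dx ≤ c`. -/
theorem statement14 (H : ℝ) (hH : H ∈ Set.Ioo (0 : ℝ) (1 / 2)) :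
    ∃ c > (0 : ℝ), ∀ a : ℝ, 0 < a →
      (∫⁻ x in Set.Ioc (0 : ℝ) a, ENNReal.ofReal (Real.exp (-2 * (a - x))) *
          (∫⁻ y in Set.Ioc (0 : ℝ) x,
            ENNReal.ofReal ((1 - Real.exp (-y)) * y ^ (H - 3 / 2))) ^ 2)
        ≤ ENNReal.ofReal c := by
  obtain ⟨hH0, hH2⟩ := hH
  set g : ℝ → ℝ≥0∞ := fun y => ENNReal.ofReal ((1 - Real.exp (-y)) * y ^ (H - 3 / 2)) with hg
  set M : ℝ≥0∞ := ∫⁻ y in Set.Ioi (0 : ℝ), g y with hMdef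
  -- M is finite
  have hsplit : Set.Ioi (0 : ℝ) = Set.Ioc (0 : ℝ) 1 ∪ Set.Ioi 1 :=
    (Set.Ioc_union_Ioi_eq_Ioi (by norm_num)).symm
  have hM1 : (∫⁻ y in Set.Ioc (0 : ℝ) 1, g y) < ⊤ := by
    have hle : ∀ y ∈ Set.Ioc (0 : ℝ) 1, g y ≤ ENNReal.ofReal (y ^ (H - 1 / 2)) := by
      intro y hy
      apply ENNReal.ofReal_le_ofReal
      have h1 : 1 - Real.exp (-y) ≤ y := by
        have := Real.add_one_le_exp (-y)
        linarith
      have h2 : (0:ℝ) ≤ y ^ (H - 3 / 2) := Real.rpow_nonneg hy.1.le _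
      calc (1 - Real.exp (-y)) * y ^ (H - 3 / 2) ≤ y * y ^ (H - 3 / 2) :=
            mul_le_mul_of_nonneg_right h1 h2
        _ = y ^ (H - 1 / 2) := by
            rw [show H - 1/2 = 1 + (H - 3/2) by ring, Real.rpow_add hy.1, Real.rpow_one]
    have hInt : IntegrableOn (fun y : ℝ => y ^ (H - 1 / 2)) (Set.Ioc (0:ℝ) 1) := by
      have := (intervalIntegral.intervalIntegrable_rpow' (by linarith : (-1:ℝ) < H - 1/2) (a := 0) (b := 1))
      simpa [intervalIntegrable_iff_integrableOn_Ioc_of_le (by norm_num : (0:ℝ) ≤ 1)] using this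
    calc (∫⁻ y in Set.Ioc (0 : ℝ) 1, g y)
        ≤ ∫⁻ y in Set.Ioc (0 : ℝ) 1, ENNReal.ofReal (y ^ (H - 1 / 2)) :=
          setLIntegral_mono' measurableSet_Ioc hle
      _ < ⊤ := hInt.lintegral_lt_top
  have hM2 : (∫⁻ y in Set.Ioi (1 : ℝ), g y) < ⊤ := by
    have hle : ∀ y ∈ Set.Ioi (1 : ℝ), g y ≤ ENNReal.ofReal (y ^ (H - 3 / 2)) := by
      intro y hy
      apply ENNReal.ofReal_le_ofReal
      have h0 : (0:ℝ) < y := lt_trans one_pos hy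
      have h2 : (0:ℝ) ≤ y ^ (H - 3 / 2) := Real.rpow_nonneg h0.le _
      have h1 : 1 - Real.exp (-y) ≤ 1 := by
        have := Real.exp_pos (-y); linarith
      calc (1 - Real.exp (-y)) * y ^ (H - 3 / 2) ≤ 1 * y ^ (H - 3 / 2) :=
            mul_le_mul_of_nonneg_right h1 h2
        _ = y ^ (H - 3 / 2) := one_mul _
    have hInt : IntegrableOn (fun y : ℝ => y ^ (H - 3 / 2)) (Set.Ioi (1:ℝ)) :=
      integrableOn_Ioi_rpow_of_lt (by linarith) one_pos
    calc (∫⁻ y in Set.Ioi (1 : ℝ), g y)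
        ≤ ∫⁻ y in Set.Ioi (1 : ℝ), ENNReal.ofReal (y ^ (H - 3 / 2)) :=
          setLIntegral_mono' measurableSet_Ioi hle
      _ < ⊤ := hInt.lintegral_lt_top
  have hM : M < ⊤ := by
    rw [hMdef, hsplit, lintegral_union measurableSet_Ioi (Set.Ioc_disjoint_Ioi le_rfl)]
    exact ENNReal.add_lt_top.2 ⟨hM1, hM2⟩
  -- the constant
  refine ⟨(M ^ 2 * ENNReal.ofReal (1/2)).toReal + 1, by positivity, ?_⟩
  intro a ha
  -- inner integral bounded by M
  have hInner : ∀ x : ℝ, (∫⁻ y in Set.Ioc (0 : ℝ) x, g y) ≤ M := by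
    intro x
    exact lintegral_mono_set (fun y hy => hy.1)
  -- outer exponential integral
  have hExpInt : (∫⁻ x in Set.Ioc (0 : ℝ) a, ENNReal.ofReal (Real.exp (-2 * (a - x))))
      ≤ ENNReal.ofReal (1/2) := by
    have hcont : Continuous (fun x : ℝ => Real.exp (-2 * (a - x))) := by
      fun_prop
    have hint : IntegrableOn (fun x : ℝ => Real.exp (-2 * (a - x))) (Set.Ioc (0:ℝ) a) :=
      hcont.integrableOn_Ioc
    rw [← ofReal_integral_eq_lintegral_ofReal hint
      (Filter.Eventually.of_forall (fun x => (Real.exp_pos _).le))]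
    apply ENNReal.ofReal_le_ofReal
    have hfun : (fun x : ℝ => Real.exp (-2 * (a - x))) = fun x => Real.exp (2 * x - 2 * a) := by
      funext x; ring_nf
    have hderiv : ∀ x ∈ Set.uIcc (0:ℝ) a,
        HasDerivAt (fun x => Real.exp (2 * x - 2 * a) / 2) (Real.exp (2 * x - 2 * a)) x := by
      intro x _
      have h1 : HasDerivAt (fun x : ℝ => 2 * x - 2 * a) 2 x := by
        simpa using ((hasDerivAt_id x).const_mul 2).sub_const (2 * a)
      have h2 := (h1.exp).div_const 2
      convert h2 using 1
      · rfl
      · rfl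
      · ring
    have hii : IntervalIntegrable (fun x => Real.exp (2 * x - 2 * a)) volume 0 a :=
      (by fun_prop : Continuous fun x : ℝ => Real.exp (2 * x - 2 * a)).intervalIntegrable 0 a
    rw [← intervalIntegral.integral_of_le ha.le, hfun,
      intervalIntegral.integral_eq_sub_of_hasDerivAt hderiv hii]
    have h3 : Real.exp (2 * 0 - 2 * a) > 0 := Real.exp_pos _
    have h4 : Real.exp (2 * a - 2 * a) = 1 := by norm_num
    rw [h4]
    norm_num at h3 ⊢
    linarith
  calc (∫⁻ x in Set.Ioc (0 : ℝ) a, ENNReal.ofReal (Real.exp (-2 * (a - x))) *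
          (∫⁻ y in Set.Ioc (0 : ℝ) x, g y) ^ 2)
      ≤ ∫⁻ x in Set.Ioc (0 : ℝ) a, ENNReal.ofReal (Real.exp (-2 * (a - x))) * M ^ 2 := by
        apply lintegral_mono
        intro x
        exact mul_le_mul_right (pow_le_pow_left' (hInner x) 2) _
    _ = (∫⁻ x in Set.Ioc (0 : ℝ) a, ENNReal.ofReal (Real.exp (-2 * (a - x)))) * M ^ 2 :=
        lintegral_mul_const' _ _ (by simpa using (ENNReal.pow_lt_top (n := 2) hM).ne)
    _ ≤ ENNReal.ofReal (1/2) * M ^ 2 := mul_le_mul_left hExpInt _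
    _ = M ^ 2 * ENNReal.ofReal (1/2) := mul_comm _ _
    _ ≤ ENNReal.ofReal ((M ^ 2 * ENNReal.ofReal (1/2)).toReal + 1) := by
        have hfin : (M ^ 2 * ENNReal.ofReal (1/2)) ≠ ⊤ :=
          ENNReal.mul_ne_top (ENNReal.pow_lt_top (n := 2) hM).ne ENNReal.ofReal_ne_top
        refine le_trans (le_of_eq (ENNReal.ofReal_toReal hfin).symm) ?_
        exact ENNReal.ofReal_le_ofReal (by linarith)
end

section
/- Let D ∈ ℬ(ℝⁿ) be a Borel set, let (e_k)_{k∈ℕ} be an orthonormal basis of L²(D;ℝ), and let (τ_k)_{k∈ℕ} ⊆ L²(D;ℝ) satisfy ∑_{k=1}^∞ ‖τ_k‖²_{L²} < ∞. Then for every f ∈ L²(D;ℝ) the series i f := ∑_{k=1}^∞ ⟨e_k, f⟩_{L²} · τ_k(·) e_k(·) converges absolutely in L¹(D;ℝ), and the map i : L²(D;ℝ) → L¹(D;ℝ) so defined is linear and bounded with ‖i f‖_{L¹} ≤ (∑_{k=1}^∞ ‖τ_k‖²_{L²})^{1/2} ‖f‖_{L²}. -/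
open MeasureTheory Filter Set
open scoped ENNReal

set_option maxHeartbeats 1000000 in
/-- For an orthonormal basis `(e_k)` of `L²(D;ℝ)` and `(τ_k) ⊆ L²(D;ℝ)` with
`∑ ‖τ_k‖² < ∞`, the series `i f = ∑ ⟨e_k, f⟩ τ_k(·) e_k(·)` converges absolutely in
`L¹(D;ℝ)` and defines a bounded linear map `i : L²(D;ℝ) → L¹(D;ℝ)` with
`‖i f‖_{L¹} ≤ (∑ ‖τ_k‖²)^{1/2} ‖f‖_{L²}`. -/
theorem statement16 (n : ℕ) (D : Set (Fin n → ℝ)) (hD : MeasurableSet D)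
    (e : HilbertBasis ℕ ℝ (Lp ℝ 2 (volume.restrict D)))
    (τ : ℕ → Lp ℝ 2 (volume.restrict D))
    (hτ : Summable fun k => ‖τ k‖ ^ 2) :
    ∃ I : Lp ℝ 2 (volume.restrict D) →L[ℝ] Lp ℝ 1 (volume.restrict D),
      ∀ f : Lp ℝ 2 (volume.restrict D),
        (Summable fun k => |(inner ℝ (e k) f : ℝ)| *
          (eLpNorm (fun x => (τ k : (Fin n → ℝ) → ℝ) x *
            ((e k : Lp ℝ 2 (volume.restrict D)) : (Fin n → ℝ) → ℝ) x) 1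
            (volume.restrict D)).toReal) ∧
        Tendsto (fun N => eLpNorm (fun x => (I f : (Fin n → ℝ) → ℝ) x -
            ∑ k ∈ Finset.range N, (inner ℝ (e k) f : ℝ) *
              ((τ k : (Fin n → ℝ) → ℝ) x *
                ((e k : Lp ℝ 2 (volume.restrict D)) : (Fin n → ℝ) → ℝ) x)) 1
            (volume.restrict D)) atTop (nhds 0) ∧
        ‖I f‖ ≤ Real.sqrt (∑' k, ‖τ k‖ ^ 2) * ‖f‖ := by
  have hhalf : (1 : ℝ≥0∞) / 1 = 1 / 2 + 1 / 2 := by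
    rw [ENNReal.div_add_div_same]
    norm_num
    rw [ENNReal.div_self (by norm_num) (by norm_num)]
  haveI : ENNReal.HolderTriple 2 2 1 := ⟨by simpa [one_div] using hhalf.symm⟩
  have hmem : ∀ k : ℕ, MemLp
      ((τ k : (Fin n → ℝ) → ℝ) • ((e k : Lp ℝ 2 (volume.restrict D)) : (Fin n → ℝ) → ℝ))
      1 (volume.restrict D) :=
    fun k => (Lp.memLp (e k : Lp ℝ 2 (volume.restrict D))).smul (Lp.memLp (τ k))
  set T : ℕ → Lp ℝ 1 (volume.restrict D) := fun k => (hmem k).toLp _ with hTdef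
  have hek : ∀ k, ‖(e k : Lp ℝ 2 (volume.restrict D))‖ = 1 := fun k => e.orthonormal.1 k
  have hTle : ∀ k, ‖T k‖ ≤ ‖τ k‖ := by
    intro k
    rw [hTdef]
    rw [Lp.norm_toLp]
    have h := eLpNorm_smul_le_mul_eLpNorm (p := 2) (q := 2) (r := 1)
      (Lp.aestronglyMeasurable (e k : Lp ℝ 2 (volume.restrict D)))
      (Lp.aestronglyMeasurable (τ k))
    have hne : eLpNorm (⇑(τ k)) 2 (volume.restrict D)
        * eLpNorm (⇑(e k : Lp ℝ 2 (volume.restrict D))) 2 (volume.restrict D) ≠ ⊤ :=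
      ENNReal.mul_ne_top (Lp.eLpNorm_ne_top _) (Lp.eLpNorm_ne_top _)
    calc (eLpNorm _ 1 (volume.restrict D)).toReal
        ≤ (eLpNorm (⇑(τ k)) 2 (volume.restrict D)
            * eLpNorm (⇑(e k : Lp ℝ 2 (volume.restrict D))) 2 (volume.restrict D)).toReal :=
          ENNReal.toReal_mono hne h
      _ = ‖τ k‖ * ‖(e k : Lp ℝ 2 (volume.restrict D))‖ := by
          rw [ENNReal.toReal_mul, Lp.norm_def, Lp.norm_def]
      _ = ‖τ k‖ := by rw [hek k, mul_one]
  have hPar : ∀ f : Lp ℝ 2 (volume.restrict D),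
      HasSum (fun k => (inner ℝ (e k) f : ℝ) ^ 2) (‖f‖ ^ 2) := by
    intro f
    have h := e.hasSum_inner_mul_inner f f
    rw [real_inner_self_eq_norm_sq] at h
    have heq : (fun k => (inner ℝ (e k) f : ℝ) ^ 2)
        = fun k => (inner ℝ f (e k) : ℝ) * (inner ℝ (e k) f : ℝ) :=
      funext fun k => by rw [sq, real_inner_comm]
    rw [heq]; exact h
  have hsum1 : ∀ f : Lp ℝ 2 (volume.restrict D),
      Summable (fun k => |(inner ℝ (e k) f : ℝ)| * ‖τ k‖) := by
    intro f
    refine Summable.of_nonneg_of_le (fun k => by positivity) (fun k => ?_)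
      (((hPar f).summable.add hτ).mul_left (1 / 2))
    have h := sq_nonneg (|(inner ℝ (e k) f : ℝ)| - ‖τ k‖)
    have h2 : |(inner ℝ (e k) f : ℝ)| ^ 2 = (inner ℝ (e k) f : ℝ) ^ 2 := sq_abs _
    nlinarith [norm_nonneg (τ k), abs_nonneg (inner ℝ (e k) f : ℝ)]
  have hnormsmul : ∀ (f : Lp ℝ 2 (volume.restrict D)) (k : ℕ),
      ‖(inner ℝ (e k) f : ℝ) • T k‖ = |(inner ℝ (e k) f : ℝ)| * ‖T k‖ := by
    intro f k; rw [norm_smul, Real.norm_eq_abs]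
  have hsumT : ∀ f : Lp ℝ 2 (volume.restrict D),
      Summable (fun k => ‖(inner ℝ (e k) f : ℝ) • T k‖) := by
    intro f
    refine Summable.of_nonneg_of_le (fun k => norm_nonneg _) (fun k => ?_) (hsum1 f)
    rw [hnormsmul f k]
    exact mul_le_mul_of_nonneg_left (hTle k) (abs_nonneg _)
  have hS : ∀ f : Lp ℝ 2 (volume.restrict D),
      Summable (fun k => (inner ℝ (e k) f : ℝ) • T k) :=
    fun f => Summable.of_norm (hsumT f)
  set L : Lp ℝ 2 (volume.restrict D) →ₗ[ℝ] Lp ℝ 1 (volume.restrict D) :=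
    { toFun := fun f => ∑' k, (inner ℝ (e k) f : ℝ) • T k
      map_add' := fun f g => by
        simp only [inner_add_right, add_smul]
        exact Summable.tsum_add (hS f) (hS g)
      map_smul' := fun a f => by
        simp only [inner_smul_right, RingHom.id_apply, mul_smul]
        exact Summable.tsum_const_smul a (hS f) } with hLdef
  have hbound : ∀ f : Lp ℝ 2 (volume.restrict D),
      ‖L f‖ ≤ Real.sqrt (∑' k, ‖τ k‖ ^ 2) * ‖f‖ := by
    intro f
    have hLf : L f = ∑' k, (inner ℝ (e k) f : ℝ) • T k := rfl
    have hcs : ∑' k, |(inner ℝ (e k) f : ℝ)| * ‖τ k‖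
        ≤ Real.sqrt (∑' k, (inner ℝ (e k) f : ℝ) ^ 2) * Real.sqrt (∑' k, ‖τ k‖ ^ 2) := by
      refine Summable.tsum_le_of_sum_le (hsum1 f) (fun s => ?_)
      calc ∑ k ∈ s, |(inner ℝ (e k) f : ℝ)| * ‖τ k‖
          ≤ Real.sqrt (∑ k ∈ s, |(inner ℝ (e k) f : ℝ)| ^ 2)
            * Real.sqrt (∑ k ∈ s, ‖τ k‖ ^ 2) := Real.sum_mul_le_sqrt_mul_sqrt s _ _
        _ ≤ Real.sqrt (∑' k, (inner ℝ (e k) f : ℝ) ^ 2) * Real.sqrt (∑' k, ‖τ k‖ ^ 2) := by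
            refine mul_le_mul (Real.sqrt_le_sqrt ?_) (Real.sqrt_le_sqrt ?_)
              (Real.sqrt_nonneg _) (Real.sqrt_nonneg _)
            · refine le_trans (le_of_eq ?_)
                (Summable.sum_le_tsum s (fun k _ => sq_nonneg _) (hPar f).summable)
              exact Finset.sum_congr rfl fun k _ => sq_abs _
            · exact Summable.sum_le_tsum s (fun k _ => sq_nonneg _) hτ
    calc ‖L f‖ = ‖∑' k, (inner ℝ (e k) f : ℝ) • T k‖ := by rw [hLf]
      _ ≤ ∑' k, ‖(inner ℝ (e k) f : ℝ) • T k‖ := norm_tsum_le_tsum_norm (hsumT f)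
      _ ≤ ∑' k, |(inner ℝ (e k) f : ℝ)| * ‖τ k‖ := by
          refine Summable.tsum_le_tsum (fun k => ?_) (hsumT f) (hsum1 f)
          rw [hnormsmul f k]
          exact mul_le_mul_of_nonneg_left (hTle k) (abs_nonneg _)
      _ ≤ Real.sqrt (∑' k, (inner ℝ (e k) f : ℝ) ^ 2) * Real.sqrt (∑' k, ‖τ k‖ ^ 2) := hcs
      _ = ‖f‖ * Real.sqrt (∑' k, ‖τ k‖ ^ 2) := by
          rw [(hPar f).tsum_eq, Real.sqrt_sq (norm_nonneg f)]
      _ = Real.sqrt (∑' k, ‖τ k‖ ^ 2) * ‖f‖ := mul_comm _ _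
  refine ⟨L.mkContinuous (Real.sqrt (∑' k, ‖τ k‖ ^ 2)) hbound, fun f => ⟨?_, ?_, ?_⟩⟩
  · have heq : ∀ k : ℕ, (eLpNorm (fun x => (τ k : (Fin n → ℝ) → ℝ) x
        * ((e k : Lp ℝ 2 (volume.restrict D)) : (Fin n → ℝ) → ℝ) x) 1
          (volume.restrict D)).toReal = ‖T k‖ := by
      intro k
      rw [hTdef, Lp.norm_toLp]
      exact congrArg ENNReal.toReal
        (eLpNorm_congr_ae (Filter.Eventually.of_forall fun x => rfl))
    simp only [heq]
    refine Summable.of_nonneg_of_le (fun k => by positivity) (fun k => ?_) (hsum1 f)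
    exact mul_le_mul_of_nonneg_left (hTle k) (abs_nonneg _)
  · have hIf : (L.mkContinuous (Real.sqrt (∑' k, ‖τ k‖ ^ 2)) hbound) f
        = ∑' k, (inner ℝ (e k) f : ℝ) • T k := rfl
    have hHasSum : HasSum (fun k => (inner ℝ (e k) f : ℝ) • T k)
        (∑' k, (inner ℝ (e k) f : ℝ) • T k) := (hS f).hasSum
    have hnorm0 : Tendsto (fun N => ‖(∑' k, (inner ℝ (e k) f : ℝ) • T k)
        - ∑ k ∈ Finset.range N, (inner ℝ (e k) f : ℝ) • T k‖) atTop (nhds 0) := by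
      have := tendsto_iff_norm_sub_tendsto_zero.mp hHasSum.tendsto_sum_nat
      simpa [norm_sub_rev] using this
    have hcoeS : ∀ N : ℕ, (⇑(∑ k ∈ Finset.range N, (inner ℝ (e k) f : ℝ) • T k)
        : (Fin n → ℝ) → ℝ) =ᵐ[volume.restrict D]
        fun x => ∑ k ∈ Finset.range N, (inner ℝ (e k) f : ℝ)
          * ((τ k : (Fin n → ℝ) → ℝ) x
            * ((e k : Lp ℝ 2 (volume.restrict D)) : (Fin n → ℝ) → ℝ) x) := by
      intro N
      induction N with
      | zero =>
        simp only [Finset.range_zero, Finset.sum_empty]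
        exact Lp.coeFn_zero ℝ 1 _
      | succ N ih =>
        simp only [Finset.sum_range_succ]
        filter_upwards [Lp.coeFn_add (∑ k ∈ Finset.range N, (inner ℝ (e k) f : ℝ) • T k)
          ((inner ℝ (e N) f : ℝ) • T N), ih,
          Lp.coeFn_smul (inner ℝ (e N) f : ℝ) (T N), (hmem N).coeFn_toLp] with x h1 h2 h3 h4
        rw [h1]
        simp only [Pi.add_apply, h2]
        rw [h3]
        simp only [Pi.smul_apply, smul_eq_mul, hTdef]
        simp only [Pi.smul_apply, smul_eq_mul] at h4
        rw [h4, Pi.mul_apply]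
    have heq2 : ∀ N : ℕ, eLpNorm (fun x =>
        ((L.mkContinuous (Real.sqrt (∑' k, ‖τ k‖ ^ 2)) hbound) f
          : (Fin n → ℝ) → ℝ) x -
        ∑ k ∈ Finset.range N, (inner ℝ (e k) f : ℝ)
          * ((τ k : (Fin n → ℝ) → ℝ) x
            * ((e k : Lp ℝ 2 (volume.restrict D)) : (Fin n → ℝ) → ℝ) x)) 1
          (volume.restrict D)
        = ENNReal.ofReal ‖(∑' k, (inner ℝ (e k) f : ℝ) • T k)
            - ∑ k ∈ Finset.range N, (inner ℝ (e k) f : ℝ) • T k‖ := by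
      intro N
      have hae : (fun x =>
          ((L.mkContinuous (Real.sqrt (∑' k, ‖τ k‖ ^ 2)) hbound) f : (Fin n → ℝ) → ℝ) x -
          ∑ k ∈ Finset.range N, (inner ℝ (e k) f : ℝ)
            * ((τ k : (Fin n → ℝ) → ℝ) x
              * ((e k : Lp ℝ 2 (volume.restrict D)) : (Fin n → ℝ) → ℝ) x))
          =ᵐ[volume.restrict D]
          ⇑((∑' k, (inner ℝ (e k) f : ℝ) • T k)
            - ∑ k ∈ Finset.range N, (inner ℝ (e k) f : ℝ) • T k) := by
        filter_upwards [hcoeS N,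
          Lp.coeFn_sub (∑' k, (inner ℝ (e k) f : ℝ) • T k)
            (∑ k ∈ Finset.range N, (inner ℝ (e k) f : ℝ) • T k)] with x h1 h2
        rw [h2, Pi.sub_apply, h1, hIf]
      rw [eLpNorm_congr_ae hae, Lp.norm_def,
        ENNReal.ofReal_toReal (Lp.eLpNorm_ne_top _)]
    simp only [heq2]
    have htend : Tendsto (fun N => ENNReal.ofReal
        ‖(∑' k, (inner ℝ (e k) f : ℝ) • T k)
          - ∑ k ∈ Finset.range N, (inner ℝ (e k) f : ℝ) • T k‖) atTop
        (nhds (ENNReal.ofReal 0)) := (ENNReal.continuous_ofReal.tendsto 0).comp hnorm0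
    simpa using htend
  · exact hbound f
end

section
/- Let H ∈ (0,1/2), T > 0, and let (λ_k)_{k∈ℕ} be a sequence of positive reals and (q_k)_{k∈ℕ} a real sequence with ∑_{k=1}^∞ q_k²/λ_k^{2H} < ∞. Then ∑_{k=1}^∞ q_k² [ ∫₀ᵀ e^{−2λ_k s}(T−s)^{2H−1} ds + ∫₀ᵀ e^{−2λ_k s} s^{2H−1} ds + ∫₀ᵀ ( ∫ₛᵀ (e^{−λ_k s} − e^{−λ_k t})(t−s)^{H−3/2} dt )² ds ] < ∞. (This is the summability estimate, with each bracket bounded by a constant times λ_k^{−2H}, that establishes the Hilbert–Schmidt property of the covariance factorization and hence existence of a weak solution of the stochastic heat equation driven by cylindrical fractional Brownian motion with H < 1/2 when A has eigenvalues −λ_k and the noise has weights q_k along the eigenbasis.) -/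
open MeasureTheory Set Real
open scoped ENNReal

private lemma lint_exp (a : ℝ) {b : ℝ} (hb : 0 < b) :
    ∫⁻ s in Ioi a, ENNReal.ofReal (Real.exp (-(b * s))) = ENNReal.ofReal (Real.exp (-(b * a)) / b) := by
  simp only [neg_mul_eq_neg_mul]
  rw [← ofReal_integral_eq_lintegral_ofReal (exp_neg_integrableOn_Ioi a hb)
      (ae_of_all _ fun x => (Real.exp_pos _).le)]
  congr 1
  have h := integral_comp_mul_left_Ioi (fun x => Real.exp (-x)) a hb
  simp only [smul_eq_mul, neg_mul_eq_neg_mul] at h ⊢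
  rw [h, integral_exp_neg_Ioi, div_eq_inv_mul, neg_mul]

private lemma lint_rpow_Ioc {c p : ℝ} (hc : 0 < c) (hp : 0 < p) :
    ∫⁻ s in Ioc (0:ℝ) c, ENNReal.ofReal (s ^ (p - 1)) = ENNReal.ofReal (c ^ p / p) := by
  have hint : IntegrableOn (fun s : ℝ => s ^ (p - 1)) (Ioc 0 c) := by
    have := intervalIntegral.intervalIntegrable_rpow' (a := 0) (b := c) (r := p - 1) (by linarith)
    rwa [intervalIntegrable_iff_integrableOn_Ioc_of_le hc.le] at this
  rw [← ofReal_integral_eq_lintegral_ofReal hint ?_]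
  · congr 1
    rw [← intervalIntegral.integral_of_le hc.le, integral_rpow (Or.inl (by linarith))]
    rw [Real.zero_rpow (by linarith : p - 1 + 1 ≠ 0)]
    ring_nf
  · filter_upwards [ae_restrict_mem measurableSet_Ioc] with x hx
    exact Real.rpow_nonneg hx.1.le _

private lemma lint_rpow_Ioi {a q : ℝ} (ha : 0 < a) (hq : q < -1) :
    ∫⁻ s in Ioi a, ENNReal.ofReal (s ^ q) = ENNReal.ofReal (a ^ (q + 1) / (-(q + 1))) := by
  rw [← ofReal_integral_eq_lintegral_ofReal (integrableOn_Ioi_rpow_of_lt hq ha) ?_]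
  · rw [integral_Ioi_rpow_of_lt hq ha]
    congr 1
    rw [neg_div, div_neg]
  · filter_upwards [ae_restrict_mem measurableSet_Ioi] with x hx
    exact Real.rpow_nonneg (ha.trans hx).le _

private lemma lint_reflect {T a : ℝ} (g : ℝ → ℝ≥0∞) :
    ∫⁻ s in Ioc a T, g (T - s) = ∫⁻ u in Ico 0 (T - a), g u := by
  have mp : MeasurePreserving (⇑(MeasurableEquiv.subLeft T)) (volume : Measure ℝ) volume :=
    Measure.measurePreserving_sub_left volume T
  have key := mp.setLIntegral_comp_preimage_emb (MeasurableEquiv.subLeft T).measurableEmbedding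
    g (Ico 0 (T - a))
  have hco : ∀ x : ℝ, (MeasurableEquiv.subLeft T) x = T - x := fun _ => rfl
  have hpre : (⇑(MeasurableEquiv.subLeft T)) ⁻¹' (Ico 0 (T - a)) = Ioc a T := by
    ext x
    rw [mem_preimage, hco, mem_Ico, mem_Ioc]
    constructor <;> (intro h; constructor <;> linarith [h.1, h.2])
  rw [hpre] at key
  simpa only [hco] using key

private lemma lint_translate {s : ℝ} (k : ℝ → ℝ≥0∞) :
    ∫⁻ t in Ioi s, k (t - s) = ∫⁻ u in Ioi (0:ℝ), k u := by
  have mp : MeasurePreserving (⇑(MeasurableEquiv.addRight s)) (volume : Measure ℝ) volume :=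
    measurePreserving_add_right volume s
  have key := mp.setLIntegral_comp_preimage_emb (MeasurableEquiv.addRight s).measurableEmbedding
    (fun t => k (t - s)) (Ioi s)
  have hco : ∀ x : ℝ, (MeasurableEquiv.addRight s) x = x + s := fun _ => rfl
  have hpre : (⇑(MeasurableEquiv.addRight s)) ⁻¹' (Ioi s) = Ioi 0 := by
    ext x
    rw [mem_preimage, hco, mem_Ioi, mem_Ioi]
    constructor <;> (intro h; linarith)
  rw [hpre] at key
  rw [← key]
  refine lintegral_congr fun x => ?_
  rw [hco]
  norm_num

private lemma lint_rpow_Ico {c p : ℝ} (hc : 0 < c) (hp : 0 < p) :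
    ∫⁻ s in Ico (0:ℝ) c, ENNReal.ofReal (s ^ (p - 1)) = ENNReal.ofReal (c ^ p / p) := by
  rw [Measure.restrict_congr_set Ico_ae_eq_Ioc]
  exact lint_rpow_Ioc hc hp

private lemma bsplit {b : ℝ} (hb : 0 < b) {p : ℝ} : (b⁻¹) ^ p = b ^ (-p) := by
  rw [← Real.rpow_neg_one b, ← Real.rpow_mul hb.le]
  ring_nf

private lemma bmul {b : ℝ} (hb : 0 < b) (x y : ℝ) : b ^ x * b ^ y = b ^ (x + y) :=
  (Real.rpow_add hb x y).symm

private lemma binv_le {b H : ℝ} (hb : 1 ≤ b) (h1 : 0 < H) (h2 : H < 1/2) :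
    b⁻¹ ≤ b ^ (-(2 * H)) := by
  have := Real.rpow_le_rpow_of_exponent_le hb (by linarith : -1 ≤ -(2 * H))
  rwa [Real.rpow_neg_one] at this

private lemma boundMid {H T b : ℝ} (h1 : 0 < H) (h2 : H < 1/2) (hT : 0 < T) (hb : 0 < b) :
    ∫⁻ s in Ioc (0:ℝ) T, ENNReal.ofReal (Real.exp (-(2 * b * s)) * s ^ (2 * H - 1)) ≤
      ENNReal.ofReal ((1 / (2 * H) + 1 / 2) * b ^ (-(2 * H))) := by
  set c := b⁻¹ with hcdef
  have hc : 0 < c := inv_pos.2 hb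
  have hsub : Ioc (0:ℝ) T ⊆ Ioc 0 c ∪ Ioi c := by
    intro x hx
    rcases le_or_gt x c with h | h
    · exact Or.inl ⟨hx.1, h⟩
    · exact Or.inr h
  have hcp : c ^ (2 * H - 1) = b ^ (1 - 2 * H) := by
    rw [hcdef, bsplit hb]
    ring_nf
  have part1 : ∫⁻ s in Ioc (0:ℝ) c, ENNReal.ofReal (Real.exp (-(2 * b * s)) * s ^ (2 * H - 1)) ≤
      ENNReal.ofReal (b ^ (-(2 * H)) / (2 * H)) := by
    have step : ∫⁻ s in Ioc (0:ℝ) c, ENNReal.ofReal (Real.exp (-(2 * b * s)) * s ^ (2 * H - 1)) ≤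
        ∫⁻ s in Ioc (0:ℝ) c, ENNReal.ofReal (s ^ (2 * H - 1)) := by
      refine setLIntegral_mono_ae' measurableSet_Ioc (ae_of_all _ fun x hx => ?_)
      refine ENNReal.ofReal_le_ofReal ?_
      calc Real.exp (-(2 * b * x)) * x ^ (2 * H - 1)
          ≤ 1 * x ^ (2 * H - 1) := by
            refine mul_le_mul_of_nonneg_right ?_ (Real.rpow_nonneg hx.1.le _)
            rw [Real.exp_le_one_iff]
            nlinarith [hx.1]
        _ = x ^ (2 * H - 1) := one_mul _
    refine step.trans ?_
    rw [lint_rpow_Ioc hc (by linarith : (0:ℝ) < 2 * H)]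
    rw [hcdef, bsplit hb]
  have part2 : ∫⁻ s in Ioi c, ENNReal.ofReal (Real.exp (-(2 * b * s)) * s ^ (2 * H - 1)) ≤
      ENNReal.ofReal (b ^ (-(2 * H)) / 2) := by
    have step : ∫⁻ s in Ioi c, ENNReal.ofReal (Real.exp (-(2 * b * s)) * s ^ (2 * H - 1)) ≤
        ∫⁻ s in Ioi c, ENNReal.ofReal (c ^ (2 * H - 1)) * ENNReal.ofReal (Real.exp (-(2 * b * s))) := by
      refine setLIntegral_mono_ae' measurableSet_Ioi (ae_of_all _ fun x hx => ?_)
      rw [← ENNReal.ofReal_mul (Real.rpow_nonneg hc.le _)]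
      refine ENNReal.ofReal_le_ofReal ?_
      rw [mul_comm (c ^ (2 * H - 1))]
      exact mul_le_mul_of_nonneg_left
        (Real.rpow_le_rpow_of_nonpos hc (le_of_lt hx) (by linarith)) (Real.exp_pos _).le
    refine step.trans ?_
    rw [lintegral_const_mul' _ _ ENNReal.ofReal_ne_top, lint_exp c (by linarith : (0:ℝ) < 2 * b),
      ← ENNReal.ofReal_mul (Real.rpow_nonneg hc.le _)]
    refine ENNReal.ofReal_le_ofReal ?_
    have e1 : Real.exp (-(2 * b * c)) ≤ 1 := by
      rw [Real.exp_le_one_iff]; nlinarith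
    calc c ^ (2 * H - 1) * (Real.exp (-(2 * b * c)) / (2 * b))
        ≤ c ^ (2 * H - 1) * (1 / (2 * b)) := by
          refine mul_le_mul_of_nonneg_left ?_ (Real.rpow_nonneg hc.le _)
          gcongr
      _ = (b ^ (1 - 2 * H) * b ^ (-1 : ℝ)) / 2 := by
          rw [hcp, Real.rpow_neg_one]
          ring
      _ = b ^ (-(2 * H)) / 2 := by
          rw [bmul hb, show (1 - 2 * H) + (-1 : ℝ) = -(2 * H) by ring]
  calc ∫⁻ s in Ioc (0:ℝ) T, ENNReal.ofReal (Real.exp (-(2 * b * s)) * s ^ (2 * H - 1))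
      ≤ ∫⁻ s in Ioc (0:ℝ) c ∪ Ioi c, ENNReal.ofReal (Real.exp (-(2 * b * s)) * s ^ (2 * H - 1)) :=
        lintegral_mono_set hsub
    _ ≤ _ + _ := lintegral_union_le _ _ _
    _ ≤ ENNReal.ofReal (b ^ (-(2 * H)) / (2 * H)) + ENNReal.ofReal (b ^ (-(2 * H)) / 2) :=
        add_le_add part1 part2
    _ ≤ _ := by
        rw [← ENNReal.ofReal_add (by positivity) (by positivity)]
        refine ENNReal.ofReal_le_ofReal (le_of_eq ?_)
        field_simp

private lemma boundFirst {H T b : ℝ} (h1 : 0 < H) (h2 : H < 1/2) (hT : 0 < T) (hb : 0 < b) :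
    ∫⁻ s in Ioc (0:ℝ) T, ENNReal.ofReal (Real.exp (-(2 * b * s)) * (T - s) ^ (2 * H - 1)) ≤
      ENNReal.ofReal ((T ^ (2 * H) / (2 * H) + (T / 2) ^ (2 * H - 1) / 2
        + (T / 2) ^ (2 * H) / (2 * H) * T⁻¹) * b ^ (-(2 * H))) := by
  set CF : ℝ := T ^ (2 * H) / (2 * H) + (T / 2) ^ (2 * H - 1) / 2
      + (T / 2) ^ (2 * H) / (2 * H) * T⁻¹ with hCF
  have hT2 : (0:ℝ) < T / 2 := half_pos hT
  have hCFparts : T ^ (2 * H) / (2 * H) ≤ CF ∧ (T / 2) ^ (2 * H - 1) / 2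
      + (T / 2) ^ (2 * H) / (2 * H) * T⁻¹ ≤ CF := by
    constructor
    · rw [hCF]
      have : 0 ≤ (T / 2) ^ (2 * H - 1) / 2 := by positivity
      have : 0 ≤ (T / 2) ^ (2 * H) / (2 * H) * T⁻¹ := by positivity
      linarith
    · rw [hCF]
      have : 0 ≤ T ^ (2 * H) / (2 * H) := by positivity
      linarith
  rcases le_or_gt b 1 with hb1 | hb1
  · -- small b : crude bound
    have hx1 : (1:ℝ) ≤ b ^ (-(2 * H)) := by
      have := Real.rpow_le_rpow_of_exponent_ge hb hb1 (by linarith : -(2 * H) ≤ 0)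
      rwa [Real.rpow_zero] at this
    have step : ∫⁻ s in Ioc (0:ℝ) T, ENNReal.ofReal (Real.exp (-(2 * b * s)) * (T - s) ^ (2 * H - 1))
        ≤ ∫⁻ s in Ioc (0:ℝ) T, ENNReal.ofReal ((T - s) ^ (2 * H - 1)) := by
      refine setLIntegral_mono_ae' measurableSet_Ioc (ae_of_all _ fun x hx => ?_)
      refine ENNReal.ofReal_le_ofReal ?_
      have : Real.exp (-(2 * b * x)) ≤ 1 := by
        rw [Real.exp_le_one_iff]; nlinarith [hx.1]
      nlinarith [Real.rpow_nonneg (by linarith [hx.2] : (0:ℝ) ≤ T - x) (2 * H - 1)]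
    refine step.trans ?_
    have refl : ∫⁻ s in Ioc (0:ℝ) T, ENNReal.ofReal ((T - s) ^ (2 * H - 1))
        = ENNReal.ofReal (T ^ (2 * H) / (2 * H)) := by
      rw [lint_reflect (fun u => ENNReal.ofReal (u ^ (2 * H - 1))), sub_zero]
      exact lint_rpow_Ico hT (by linarith)
    rw [refl]
    refine ENNReal.ofReal_le_ofReal ?_
    calc T ^ (2 * H) / (2 * H) ≤ CF := hCFparts.1
      _ ≤ CF * b ^ (-(2 * H)) := by
          refine le_mul_of_one_le_right ?_ hx1
          rw [hCF]; positivity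
  · -- large b
    have hbinv : b⁻¹ ≤ b ^ (-(2 * H)) := binv_le hb1.le h1 h2
    have hsub : Ioc (0:ℝ) T ⊆ Ioc 0 (T / 2) ∪ Ioc (T / 2) T := by
      intro x hx
      rcases le_or_gt x (T / 2) with h | h
      · exact Or.inl ⟨hx.1, h⟩
      · exact Or.inr ⟨h, hx.2⟩
    have partA : ∫⁻ s in Ioc (0:ℝ) (T / 2),
          ENNReal.ofReal (Real.exp (-(2 * b * s)) * (T - s) ^ (2 * H - 1)) ≤
        ENNReal.ofReal ((T / 2) ^ (2 * H - 1) / 2 * b ^ (-(2 * H))) := by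
      have step : ∫⁻ s in Ioc (0:ℝ) (T / 2),
            ENNReal.ofReal (Real.exp (-(2 * b * s)) * (T - s) ^ (2 * H - 1)) ≤
          ∫⁻ s in Ioc (0:ℝ) (T / 2),
            ENNReal.ofReal ((T / 2) ^ (2 * H - 1)) * ENNReal.ofReal (Real.exp (-(2 * b * s))) := by
        refine setLIntegral_mono_ae' measurableSet_Ioc (ae_of_all _ fun x hx => ?_)
        rw [← ENNReal.ofReal_mul (Real.rpow_nonneg hT2.le _)]
        refine ENNReal.ofReal_le_ofReal ?_
        rw [mul_comm ((T / 2) ^ (2 * H - 1))]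
        refine mul_le_mul_of_nonneg_left ?_ (Real.exp_pos _).le
        exact Real.rpow_le_rpow_of_nonpos hT2 (by linarith [hx.2]) (by linarith)
      refine step.trans ?_
      rw [lintegral_const_mul' _ _ ENNReal.ofReal_ne_top]
      have hmono : ∫⁻ s in Ioc (0:ℝ) (T / 2), ENNReal.ofReal (Real.exp (-(2 * b * s))) ≤
          ENNReal.ofReal (1 / (2 * b)) := by
        calc ∫⁻ s in Ioc (0:ℝ) (T / 2), ENNReal.ofReal (Real.exp (-(2 * b * s)))
            ≤ ∫⁻ s in Ioi (0:ℝ), ENNReal.ofReal (Real.exp (-(2 * b * s))) :=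
              lintegral_mono_set Ioc_subset_Ioi_self
          _ = ENNReal.ofReal (Real.exp (-(2 * b * 0)) / (2 * b)) :=
              lint_exp 0 (by linarith : (0:ℝ) < 2 * b)
          _ = ENNReal.ofReal (1 / (2 * b)) := by norm_num
      calc ENNReal.ofReal ((T / 2) ^ (2 * H - 1)) *
              ∫⁻ s in Ioc (0:ℝ) (T / 2), ENNReal.ofReal (Real.exp (-(2 * b * s)))
          ≤ ENNReal.ofReal ((T / 2) ^ (2 * H - 1)) * ENNReal.ofReal (1 / (2 * b)) :=
            mul_le_mul_right hmono _
        _ = ENNReal.ofReal ((T / 2) ^ (2 * H - 1) * (1 / (2 * b))) :=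
            (ENNReal.ofReal_mul (Real.rpow_nonneg hT2.le _)).symm
        _ ≤ ENNReal.ofReal ((T / 2) ^ (2 * H - 1) / 2 * b ^ (-(2 * H))) := by
            refine ENNReal.ofReal_le_ofReal ?_
            have h0 : (0:ℝ) ≤ (T / 2) ^ (2 * H - 1) := Real.rpow_nonneg hT2.le _
            calc (T / 2) ^ (2 * H - 1) * (1 / (2 * b))
                = (T / 2) ^ (2 * H - 1) / 2 * b⁻¹ := by
                  field_simp
              _ ≤ (T / 2) ^ (2 * H - 1) / 2 * b ^ (-(2 * H)) := by
                  refine mul_le_mul_of_nonneg_left hbinv (by positivity)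
    have partB : ∫⁻ s in Ioc (T / 2) T,
          ENNReal.ofReal (Real.exp (-(2 * b * s)) * (T - s) ^ (2 * H - 1)) ≤
        ENNReal.ofReal ((T / 2) ^ (2 * H) / (2 * H) * T⁻¹ * b ^ (-(2 * H))) := by
      have step : ∫⁻ s in Ioc (T / 2) T,
            ENNReal.ofReal (Real.exp (-(2 * b * s)) * (T - s) ^ (2 * H - 1)) ≤
          ∫⁻ s in Ioc (T / 2) T,
            ENNReal.ofReal (Real.exp (-(b * T))) * ENNReal.ofReal ((T - s) ^ (2 * H - 1)) := by
        refine setLIntegral_mono_ae' measurableSet_Ioc (ae_of_all _ fun x hx => ?_)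
        rw [← ENNReal.ofReal_mul (Real.exp_pos _).le]
        refine ENNReal.ofReal_le_ofReal ?_
        refine mul_le_mul_of_nonneg_right ?_
          (Real.rpow_nonneg (by linarith [hx.2] : (0:ℝ) ≤ T - x) _)
        refine Real.exp_le_exp.2 ?_
        nlinarith [hx.1]
      refine step.trans ?_
      rw [lintegral_const_mul' _ _ ENNReal.ofReal_ne_top]
      have refl : ∫⁻ s in Ioc (T / 2) T, ENNReal.ofReal ((T - s) ^ (2 * H - 1))
          = ENNReal.ofReal ((T / 2) ^ (2 * H) / (2 * H)) := by
        rw [lint_reflect (fun u => ENNReal.ofReal (u ^ (2 * H - 1))),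
          show T - T / 2 = T / 2 by ring]
        exact lint_rpow_Ico hT2 (by linarith)
      rw [refl, ← ENNReal.ofReal_mul (Real.exp_pos _).le]
      refine ENNReal.ofReal_le_ofReal ?_
      have hexp : Real.exp (-(b * T)) ≤ b⁻¹ * T⁻¹ := by
        have h3 : b * T ≤ Real.exp (b * T) := by
          linarith [Real.add_one_le_exp (b * T)]
        have h4 : Real.exp (-(b * T)) = (Real.exp (b * T))⁻¹ := by
          rw [← Real.exp_neg]
        rw [h4, ← mul_inv]
        exact inv_anti₀ (by positivity) h3
      have h0 : (0:ℝ) ≤ (T / 2) ^ (2 * H) / (2 * H) := by positivity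
      calc Real.exp (-(b * T)) * ((T / 2) ^ (2 * H) / (2 * H))
          ≤ (b⁻¹ * T⁻¹) * ((T / 2) ^ (2 * H) / (2 * H)) := by
            refine mul_le_mul_of_nonneg_right hexp h0
        _ = (T / 2) ^ (2 * H) / (2 * H) * T⁻¹ * b⁻¹ := by ring
        _ ≤ (T / 2) ^ (2 * H) / (2 * H) * T⁻¹ * b ^ (-(2 * H)) := by
            refine mul_le_mul_of_nonneg_left hbinv (by positivity)
    calc ∫⁻ s in Ioc (0:ℝ) T, ENNReal.ofReal (Real.exp (-(2 * b * s)) * (T - s) ^ (2 * H - 1))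
        ≤ ∫⁻ s in Ioc (0:ℝ) (T / 2) ∪ Ioc (T / 2) T,
            ENNReal.ofReal (Real.exp (-(2 * b * s)) * (T - s) ^ (2 * H - 1)) :=
          lintegral_mono_set hsub
      _ ≤ _ + _ := lintegral_union_le _ _ _
      _ ≤ ENNReal.ofReal ((T / 2) ^ (2 * H - 1) / 2 * b ^ (-(2 * H))) +
            ENNReal.ofReal ((T / 2) ^ (2 * H) / (2 * H) * T⁻¹ * b ^ (-(2 * H))) :=
          add_le_add partA partB
      _ ≤ _ := by
          rw [← ENNReal.ofReal_add (by positivity) (by positivity)]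
          refine ENNReal.ofReal_le_ofReal ?_
          have h5 : (0:ℝ) ≤ b ^ (-(2 * H)) := Real.rpow_nonneg hb.le _
          have h6 : (0:ℝ) ≤ T ^ (2 * H) / (2 * H) := by positivity
          rw [hCF]
          nlinarith

private lemma Jbound {H b : ℝ} (h1 : 0 < H) (h2 : H < 1/2) (hb : 0 < b) :
    ∫⁻ u in Ioi (0:ℝ), ENNReal.ofReal (min 1 (b * u) * u ^ (H - 3/2)) ≤
      ENNReal.ofReal ((1 / (H + 1/2) + 1 / (1/2 - H)) * b ^ (1/2 - H)) := by
  set c := b⁻¹ with hcdef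
  have hc : 0 < c := inv_pos.2 hb
  have hsub : Ioi (0:ℝ) ⊆ Ioc 0 c ∪ Ioi c := by
    intro x hx
    rcases le_or_gt x c with h | h
    · exact Or.inl ⟨hx, h⟩
    · exact Or.inr h
  have part1 : ∫⁻ u in Ioc (0:ℝ) c, ENNReal.ofReal (min 1 (b * u) * u ^ (H - 3/2)) ≤
      ENNReal.ofReal (b ^ (1/2 - H) / (H + 1/2)) := by
    have step : ∫⁻ u in Ioc (0:ℝ) c, ENNReal.ofReal (min 1 (b * u) * u ^ (H - 3/2)) ≤
        ∫⁻ u in Ioc (0:ℝ) c, ENNReal.ofReal b * ENNReal.ofReal (u ^ ((H + 1/2) - 1)) := by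
      refine setLIntegral_mono_ae' measurableSet_Ioc (ae_of_all _ fun x hx => ?_)
      rw [← ENNReal.ofReal_mul hb.le]
      refine ENNReal.ofReal_le_ofReal ?_
      have hx0 : (0:ℝ) < x := hx.1
      have hr : x ^ ((H + 1/2) - 1) = x * x ^ (H - 3/2) := by
        rw [show (H + 1/2) - 1 = 1 + (H - 3/2) by ring, Real.rpow_add hx0, Real.rpow_one]
      rw [hr]
      calc min 1 (b * x) * x ^ (H - 3/2) ≤ (b * x) * x ^ (H - 3/2) :=
            mul_le_mul_of_nonneg_right (min_le_right _ _) (Real.rpow_nonneg hx0.le _)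
        _ = b * (x * x ^ (H - 3/2)) := by ring
    refine step.trans ?_
    rw [lintegral_const_mul' _ _ ENNReal.ofReal_ne_top,
      lint_rpow_Ioc hc (by linarith : (0:ℝ) < H + 1/2),
      ← ENNReal.ofReal_mul hb.le]
    refine ENNReal.ofReal_le_ofReal (le_of_eq ?_)
    rw [hcdef, bsplit hb]
    rw [div_eq_mul_inv, div_eq_mul_inv, ← mul_assoc]
    congr 1
    calc b * b ^ (-(H + 1/2)) = b ^ (1:ℝ) * b ^ (-(H + 1/2)) := by rw [Real.rpow_one]
      _ = b ^ (1/2 - H) := by rw [bmul hb, show (1:ℝ) + -(H + 1/2) = 1/2 - H by ring]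
  have part2 : ∫⁻ u in Ioi c, ENNReal.ofReal (min 1 (b * u) * u ^ (H - 3/2)) ≤
      ENNReal.ofReal (b ^ (1/2 - H) / (1/2 - H)) := by
    have step : ∫⁻ u in Ioi c, ENNReal.ofReal (min 1 (b * u) * u ^ (H - 3/2)) ≤
        ∫⁻ u in Ioi c, ENNReal.ofReal (u ^ (H - 3/2)) := by
      refine setLIntegral_mono_ae' measurableSet_Ioi (ae_of_all _ fun x hx => ?_)
      refine ENNReal.ofReal_le_ofReal ?_
      calc min 1 (b * x) * x ^ (H - 3/2) ≤ 1 * x ^ (H - 3/2) :=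
            mul_le_mul_of_nonneg_right (min_le_left _ _)
              (Real.rpow_nonneg (hc.trans hx).le _)
        _ = x ^ (H - 3/2) := one_mul _
    refine step.trans ?_
    rw [lint_rpow_Ioi hc (by linarith : H - 3/2 < -1)]
    refine ENNReal.ofReal_le_ofReal (le_of_eq ?_)
    rw [hcdef, bsplit hb, show -(H - 3/2 + 1) = 1/2 - H by ring]
  calc ∫⁻ u in Ioi (0:ℝ), ENNReal.ofReal (min 1 (b * u) * u ^ (H - 3/2))
      ≤ ∫⁻ u in Ioc (0:ℝ) c ∪ Ioi c, ENNReal.ofReal (min 1 (b * u) * u ^ (H - 3/2)) :=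
        lintegral_mono_set hsub
    _ ≤ _ + _ := lintegral_union_le _ _ _
    _ ≤ ENNReal.ofReal (b ^ (1/2 - H) / (H + 1/2)) + ENNReal.ofReal (b ^ (1/2 - H) / (1/2 - H)) :=
        add_le_add part1 part2
    _ ≤ _ := by
        have hA : (0:ℝ) < H + 1/2 := by linarith
        have hB : (0:ℝ) < 1/2 - H := by linarith
        rw [← ENNReal.ofReal_add (by positivity) (by positivity)]
        refine ENNReal.ofReal_le_ofReal (le_of_eq ?_)
        field_simp

private lemma innerBound {H T b : ℝ} (h1 : 0 < H) (h2 : H < 1/2) (hb : 0 < b) (s : ℝ) :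
    ∫⁻ t in Ioc s T, ENNReal.ofReal ((Real.exp (-(b * s)) - Real.exp (-(b * t))) *
        (t - s) ^ (H - 3/2)) ≤
      ENNReal.ofReal (Real.exp (-(b * s))) *
        ENNReal.ofReal ((1 / (H + 1/2) + 1 / (1/2 - H)) * b ^ (1/2 - H)) := by
  have step : ∫⁻ t in Ioc s T, ENNReal.ofReal ((Real.exp (-(b * s)) - Real.exp (-(b * t))) *
        (t - s) ^ (H - 3/2)) ≤
      ∫⁻ t in Ioc s T, ENNReal.ofReal (Real.exp (-(b * s))) *
        ENNReal.ofReal (min 1 (b * (t - s)) * (t - s) ^ (H - 3/2)) := by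
    refine setLIntegral_mono_ae' measurableSet_Ioc (ae_of_all _ fun t ht => ?_)
    rw [← ENNReal.ofReal_mul (Real.exp_pos _).le]
    refine ENNReal.ofReal_le_ofReal ?_
    have hu : 0 < t - s := sub_pos.2 ht.1
    have key : Real.exp (-(b * s)) - Real.exp (-(b * t)) ≤
        Real.exp (-(b * s)) * min 1 (b * (t - s)) := by
      rcases le_total 1 (b * (t - s)) with h | h
      · rw [min_eq_left h]
        have := (Real.exp_pos (-(b * t))).le
        nlinarith
      · rw [min_eq_right h]
        have hsplit : Real.exp (-(b * t)) = Real.exp (-(b * s)) * Real.exp (-(b * (t - s))) := by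
          rw [← Real.exp_add]
          congr 1
          ring
        have hone : 1 - Real.exp (-(b * (t - s))) ≤ b * (t - s) := by
          linarith [Real.add_one_le_exp (-(b * (t - s)))]
        calc Real.exp (-(b * s)) - Real.exp (-(b * t))
            = Real.exp (-(b * s)) * (1 - Real.exp (-(b * (t - s)))) := by
              rw [hsplit]; ring
          _ ≤ Real.exp (-(b * s)) * (b * (t - s)) :=
              mul_le_mul_of_nonneg_left hone (Real.exp_pos _).le
    calc (Real.exp (-(b * s)) - Real.exp (-(b * t))) * (t - s) ^ (H - 3/2)
        ≤ (Real.exp (-(b * s)) * min 1 (b * (t - s))) * (t - s) ^ (H - 3/2) :=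
          mul_le_mul_of_nonneg_right key (Real.rpow_nonneg hu.le _)
      _ = Real.exp (-(b * s)) * (min 1 (b * (t - s)) * (t - s) ^ (H - 3/2)) := mul_assoc _ _ _
  refine step.trans ?_
  rw [lintegral_const_mul' _ _ ENNReal.ofReal_ne_top]
  refine mul_le_mul_right ?_ _
  calc ∫⁻ t in Ioc s T, ENNReal.ofReal (min 1 (b * (t - s)) * (t - s) ^ (H - 3/2))
      ≤ ∫⁻ t in Ioi s, ENNReal.ofReal (min 1 (b * (t - s)) * (t - s) ^ (H - 3/2)) :=
        lintegral_mono_set Ioc_subset_Ioi_self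
    _ = ∫⁻ u in Ioi (0:ℝ), ENNReal.ofReal (min 1 (b * u) * u ^ (H - 3/2)) :=
        lint_translate (fun u => ENNReal.ofReal (min 1 (b * u) * u ^ (H - 3/2)))
    _ ≤ _ := Jbound h1 h2 hb

private lemma boundThird {H T b : ℝ} (h1 : 0 < H) (h2 : H < 1/2) (hT : 0 < T) (hb : 0 < b) :
    ∫⁻ s in Ioc (0:ℝ) T, (∫⁻ t in Ioc s T,
        ENNReal.ofReal ((Real.exp (-(b * s)) - Real.exp (-(b * t))) * (t - s) ^ (H - 3/2))) ^ 2 ≤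
      ENNReal.ofReal ((1 / (H + 1/2) + 1 / (1/2 - H)) ^ 2 / 2 * b ^ (-(2 * H))) := by
  set c0 : ℝ := 1 / (H + 1/2) + 1 / (1/2 - H) with hc0
  have hc0pos : 0 < c0 := by
    rw [hc0]
    have hA : (0:ℝ) < H + 1/2 := by linarith
    have hB : (0:ℝ) < 1/2 - H := by linarith
    positivity
  set K : ℝ≥0∞ := ENNReal.ofReal (c0 * b ^ (1/2 - H)) with hK
  have step : ∫⁻ s in Ioc (0:ℝ) T, (∫⁻ t in Ioc s T,
        ENNReal.ofReal ((Real.exp (-(b * s)) - Real.exp (-(b * t))) * (t - s) ^ (H - 3/2))) ^ 2 ≤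
      ∫⁻ s in Ioc (0:ℝ) T, K ^ 2 * ENNReal.ofReal (Real.exp (-(2 * b * s))) := by
    refine setLIntegral_mono_ae' measurableSet_Ioc (ae_of_all _ fun s hs => ?_)
    have hinner := innerBound (T := T) h1 h2 hb s
    calc (∫⁻ t in Ioc s T,
          ENNReal.ofReal ((Real.exp (-(b * s)) - Real.exp (-(b * t))) * (t - s) ^ (H - 3/2))) ^ 2
        ≤ (ENNReal.ofReal (Real.exp (-(b * s))) * K) ^ 2 := by
          gcongr
      _ = K ^ 2 * ENNReal.ofReal (Real.exp (-(b * s))) ^ 2 := by ring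
      _ = K ^ 2 * ENNReal.ofReal (Real.exp (-(2 * b * s))) := by
          rw [← ENNReal.ofReal_pow (Real.exp_pos _).le,
            show Real.exp (-(b * s)) ^ 2 = Real.exp (-(2 * b * s)) by
              rw [sq, ← Real.exp_add]; congr 1; ring]
  refine step.trans ?_
  rw [lintegral_const_mul' _ _ (by rw [hK]; exact (ENNReal.pow_ne_top ENNReal.ofReal_ne_top))]
  have hmono : ∫⁻ s in Ioc (0:ℝ) T, ENNReal.ofReal (Real.exp (-(2 * b * s))) ≤
      ENNReal.ofReal (1 / (2 * b)) := by
    calc ∫⁻ s in Ioc (0:ℝ) T, ENNReal.ofReal (Real.exp (-(2 * b * s)))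
        ≤ ∫⁻ s in Ioi (0:ℝ), ENNReal.ofReal (Real.exp (-(2 * b * s))) :=
          lintegral_mono_set Ioc_subset_Ioi_self
      _ = ENNReal.ofReal (Real.exp (-(2 * b * 0)) / (2 * b)) :=
          lint_exp 0 (by linarith : (0:ℝ) < 2 * b)
      _ = ENNReal.ofReal (1 / (2 * b)) := by norm_num
  calc K ^ 2 * ∫⁻ s in Ioc (0:ℝ) T, ENNReal.ofReal (Real.exp (-(2 * b * s)))
      ≤ K ^ 2 * ENNReal.ofReal (1 / (2 * b)) := mul_le_mul_right hmono _
    _ = ENNReal.ofReal ((c0 * b ^ (1/2 - H)) ^ 2 * (1 / (2 * b))) := by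
        rw [hK, ← ENNReal.ofReal_pow (by positivity), ← ENNReal.ofReal_mul (by positivity)]
    _ ≤ ENNReal.ofReal (c0 ^ 2 / 2 * b ^ (-(2 * H))) := by
        refine ENNReal.ofReal_le_ofReal (le_of_eq ?_)
        have e1 : (b ^ (1/2 - H)) ^ 2 = b ^ (1 - 2 * H) := by
          rw [sq, bmul hb, show (1/2 - H) + (1/2 - H) = 1 - 2 * H by ring]
        have e2 : b ^ (1 - 2 * H) * b⁻¹ = b ^ (-(2 * H)) := by
          rw [← Real.rpow_neg_one b, bmul hb, show (1 - 2 * H) + (-1:ℝ) = -(2 * H) by ring]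
        calc (c0 * b ^ (1/2 - H)) ^ 2 * (1 / (2 * b))
            = c0 ^ 2 / 2 * ((b ^ (1/2 - H)) ^ 2 * b⁻¹) := by ring
          _ = c0 ^ 2 / 2 * b ^ (-(2 * H)) := by rw [e1, e2]

/-- For `H < 1/2`: if `∑ q_k²/λ_k^{2H} < ∞` then the sum over `k` of `q_k²` times the three
singular integrals appearing in the `K*`-norm of `s ↦ e^{-λ_k s}` is finite (the
Hilbert–Schmidt criterion for the stochastic heat equation driven by cylindrical fBm). -/
theorem statement19 (H T : ℝ) (hH : H ∈ Set.Ioo (0 : ℝ) (1 / 2)) (hT : 0 < T)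
    (l : ℕ → ℝ) (hl : ∀ k, 0 < l k) (q : ℕ → ℝ)
    (hsum : Summable fun k => q k ^ 2 / (l k) ^ (2 * H)) :
    (∑' k, ENNReal.ofReal (q k ^ 2) *
        ((∫⁻ s in Set.Ioc (0 : ℝ) T,
            ENNReal.ofReal (Real.exp (-2 * l k * s) * (T - s) ^ (2 * H - 1))) +
         (∫⁻ s in Set.Ioc (0 : ℝ) T,
            ENNReal.ofReal (Real.exp (-2 * l k * s) * s ^ (2 * H - 1))) +
         (∫⁻ s in Set.Ioc (0 : ℝ) T,
            (∫⁻ t in Set.Ioc s T,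
              ENNReal.ofReal ((Real.exp (-(l k) * s) - Real.exp (-(l k) * t)) *
                (t - s) ^ (H - 3 / 2))) ^ 2))) < ⊤ := by
  obtain ⟨h1, h2⟩ := hH
  simp only [neg_mul]
  set CF : ℝ := T ^ (2 * H) / (2 * H) + (T / 2) ^ (2 * H - 1) / 2
      + (T / 2) ^ (2 * H) / (2 * H) * T⁻¹ with hCFdef
  set CM : ℝ := 1 / (2 * H) + 1 / 2 with hCMdef
  set C3 : ℝ := (1 / (H + 1/2) + 1 / (1/2 - H)) ^ 2 / 2 with hC3def
  have hCF0 : 0 ≤ CF := by rw [hCFdef]; positivity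
  have hCM0 : 0 ≤ CM := by rw [hCMdef]; positivity
  have hC30 : 0 ≤ C3 := by rw [hC3def]; positivity
  set C : ℝ := CF + CM + C3 with hCdef
  have hC0 : 0 ≤ C := by rw [hCdef]; linarith
  refine lt_of_le_of_lt (ENNReal.tsum_le_tsum (fun k => ?_))
    (?_ : (∑' k, ENNReal.ofReal (C * (q k ^ 2 / (l k) ^ (2 * H)))) < ⊤)
  · -- per-k bound
    have hbk := hl k
    have hx0 : (0:ℝ) ≤ (l k) ^ (-(2 * H)) := Real.rpow_nonneg hbk.le _
    have e : (∫⁻ s in Set.Ioc (0 : ℝ) T,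
            ENNReal.ofReal (Real.exp (-(2 * l k * s)) * (T - s) ^ (2 * H - 1))) +
         (∫⁻ s in Set.Ioc (0 : ℝ) T,
            ENNReal.ofReal (Real.exp (-(2 * l k * s)) * s ^ (2 * H - 1))) +
         (∫⁻ s in Set.Ioc (0 : ℝ) T,
            (∫⁻ t in Set.Ioc s T,
              ENNReal.ofReal ((Real.exp (-(l k * s)) - Real.exp (-(l k * t))) *
                (t - s) ^ (H - 3 / 2))) ^ 2) ≤
        ENNReal.ofReal (C * (l k) ^ (-(2 * H))) := by
      calc _ ≤ ENNReal.ofReal (CF * (l k) ^ (-(2 * H))) +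
            ENNReal.ofReal (CM * (l k) ^ (-(2 * H))) +
            ENNReal.ofReal (C3 * (l k) ^ (-(2 * H))) :=
          add_le_add (add_le_add (boundFirst h1 h2 hT hbk) (boundMid h1 h2 hT hbk))
            (boundThird h1 h2 hT hbk)
        _ = ENNReal.ofReal (C * (l k) ^ (-(2 * H))) := by
          rw [← ENNReal.ofReal_add (mul_nonneg hCF0 hx0) (mul_nonneg hCM0 hx0),
            ← ENNReal.ofReal_add (add_nonneg (mul_nonneg hCF0 hx0) (mul_nonneg hCM0 hx0))
              (mul_nonneg hC30 hx0)]
          congr 1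
          rw [hCdef]
          ring
    refine le_trans (mul_le_mul_right e _) (le_of_eq ?_)
    rw [← ENNReal.ofReal_mul (sq_nonneg _)]
    congr 1
    rw [Real.rpow_neg hbk.le, div_eq_mul_inv]
    ring
  · rw [← ENNReal.ofReal_tsum_of_nonneg
      (fun k => mul_nonneg hC0 (div_nonneg (sq_nonneg _) (Real.rpow_nonneg (hl k).le _)))
      (hsum.mul_left C)]
    exact ENNReal.ofReal_lt_top
end
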